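/- arXiv:2002.05834 — 8 statements merged into one kernel-verified Lean document; each statement's English description precedes it below -/
import Mathlib

section
/- Let p be a prime and g, h nonzero polynomials in F_p[t] with Wronskian Wr(g,h) = g·h' − g'·h = 0. Then the difference of the degrees of g and h is divisible by p. -/
open Polynomial

lemma wr_aux {R : Type*} [CommRing R] (f q : R[X]) :
    (f * derivative q).coeff (f.natDegree + q.natDegree - 1)
      = (q.natDegree : R) * (f.leadingCoeff * q.leadingCoeff) := by
  rcases Nat.eq_zero_or_pos q.natDegree with hm | hm
  · obtain ⟨a, rfl⟩ := natDegree_eq_zero.mp hm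
    simp
  · rw [coeff_mul, Finset.sum_eq_single (f.natDegree, q.natDegree - 1)]
    · rw [coeff_derivative, Nat.sub_add_cancel hm]
      have : ((q.natDegree - 1 : ℕ) : R) + 1 = (q.natDegree : R) := by
        exact_mod_cast congrArg Nat.cast (Nat.sub_add_cancel hm)
      rw [this, leadingCoeff, leadingCoeff]
      ring
    · rintro ⟨i, j⟩ hij hne
      rw [Finset.HasAntidiagonal.mem_antidiagonal] at hij
      rcases lt_or_ge f.natDegree i with hi | hi
      · rw [coeff_eq_zero_of_natDegree_lt hi, zero_mul]
      · have hj : q.natDegree < j + 1 := by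
          rcases Nat.lt_or_ge j q.natDegree with hj | hj
          · exfalso
            apply hne
            have : i = f.natDegree ∧ j = q.natDegree - 1 := by omega
            simp [this.1, this.2]
          · omega
        rw [coeff_derivative, coeff_eq_zero_of_natDegree_lt hj]
        ring
    · intro hmem
      exfalso
      apply hmem
      rw [Finset.HasAntidiagonal.mem_antidiagonal]
      omega

/-- If `g, h` are nonzero polynomials over `𝔽_p` with vanishing
Wronskian `g·h' − g'·h = 0`, then `p` divides the difference of their degrees. -/
theorem stmt1 (p : ℕ) [Fact p.Prime]
    (g h : Polynomial (ZMod p)) (hg : g ≠ 0) (hh : h ≠ 0)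
    (hW : g * derivative h - derivative g * h = 0) :
    (p : ℤ) ∣ ((g.natDegree : ℤ) - (h.natDegree : ℤ)) := by
  have hc := congrArg (fun q => q.coeff (g.natDegree + h.natDegree - 1)) hW
  simp only [coeff_sub, coeff_zero] at hc
  have h1 := wr_aux g h
  have h2 := wr_aux h g
  rw [mul_comm (derivative g) h] at hc
  rw [Nat.add_comm h.natDegree g.natDegree] at h2
  rw [h1, h2] at hc
  have hlc : g.leadingCoeff * h.leadingCoeff ≠ 0 :=
    mul_ne_zero (leadingCoeff_ne_zero.2 hg) (leadingCoeff_ne_zero.2 hh)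
  have key : (h.natDegree : ZMod p) = (g.natDegree : ZMod p) := by
    have := sub_eq_zero.mp hc
    rw [mul_comm h.leadingCoeff g.leadingCoeff] at this
    exact mul_right_cancel₀ hlc this
  have : (((g.natDegree : ℤ) - (h.natDegree : ℤ) : ℤ) : ZMod p) = 0 := by
    push_cast
    rw [key]
    ring
  exact (ZMod.intCast_zmod_eq_zero_iff_dvd _ _).mp this
end

section
/- Let K be a field, z_1,...,z_n distinct elements of K, M a positive integer, and Φ(x) = ∏_{a=1}^n (x−z_a)^M. The Mn + 1 polynomials Φ(x) together with Φ(x)/(x−z_j)^m for j = 1,...,n, 1 ≤ m ≤ M, form a basis of the K-vector space of polynomials of degree at most Mn. -/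
open Polynomial Finset

/-- For distinct `z_1,…,z_n` in a field `K` and `M ≥ 1`, the
`Mn + 1` polynomials `Φ = ∏_a(x−z_a)^M` together with
`Φ/(x−z_j)^m = (x−z_j)^{M−m}·∏_{a≠j}(x−z_a)^M`, `j = 1,…,n`, `1 ≤ m ≤ M`,
form a basis of the space of polynomials of degree ≤ Mn. -/
theorem stmt9 (K : Type*) [Field K] (n M : ℕ) (hn : 0 < n) (hM : 0 < M)
    (z : Fin n → K) (hz : Function.Injective z) :
    LinearIndependent K (fun o : Option (Fin n × Fin M) =>
      Option.elim o (∏ a : Fin n, (X - C (z a)) ^ M)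
        (fun jm => (X - C (z jm.1)) ^ (M - (jm.2.1 + 1)) *
          ∏ a ∈ univ.erase jm.1, (X - C (z a)) ^ M)) ∧
    Submodule.span K (Set.range (fun o : Option (Fin n × Fin M) =>
      Option.elim o (∏ a : Fin n, (X - C (z a)) ^ M)
        (fun jm => (X - C (z jm.1)) ^ (M - (jm.2.1 + 1)) *
          ∏ a ∈ univ.erase jm.1, (X - C (z a)) ^ M)))
      = Polynomial.degreeLT K (M * n + 1) := by
  set Φ : K[X] := ∏ a : Fin n, (X - C (z a)) ^ M with hΦdef
  set R : Fin n → K[X] := fun j => ∏ a ∈ univ.erase j, (X - C (z a)) ^ M with hRdef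
  set v : Option (Fin n × Fin M) → K[X] := fun o =>
      Option.elim o Φ (fun jm => (X - C (z jm.1)) ^ (M - (jm.2.1 + 1)) * R jm.1) with hvdef
  have hmonicΦ : Φ.Monic := monic_prod_of_monic _ _ fun a _ => (monic_X_sub_C _).pow M
  have hmonicR : ∀ j, (R j).Monic := fun j =>
    monic_prod_of_monic _ _ fun a _ => (monic_X_sub_C _).pow M
  have hmonicv : ∀ jm : Fin n × Fin M, (v (some jm)).Monic := fun jm =>
    ((monic_X_sub_C _).pow _).mul (hmonicR _)
  -- divisibility facts
  have hΦsplit : ∀ j : Fin n, Φ = (X - C (z j)) ^ M * R j := fun j =>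
    (Finset.mul_prod_erase univ _ (mem_univ j)).symm
  have hdvdR : ∀ j j' : Fin n, j ≠ j' → (X - C (z j)) ^ M ∣ R j' := fun j j' h =>
    Finset.dvd_prod_of_mem _ (Finset.mem_erase.2 ⟨h, mem_univ j⟩)
  have hndvd : ∀ j : Fin n, ¬ (X - C (z j)) ∣ R j := by
    intro j hdvd
    rw [dvd_iff_isRoot, IsRoot, hRdef, eval_prod] at hdvd
    obtain ⟨a, ha, ha0⟩ := Finset.prod_eq_zero_iff.1 hdvd
    rw [eval_pow, eval_sub, eval_X, eval_C, pow_eq_zero_iff hM.ne', sub_eq_zero] at ha0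
    exact (Finset.mem_erase.1 ha).1 (hz ha0).symm
  have hli : LinearIndependent K v := by
    rw [Fintype.linearIndependent_iff]
    intro c hc
    rw [Fintype.sum_option, Fintype.sum_prod_type] at hc
    have key : ∀ j : Fin n, ∀ m : Fin M, c (some (j, m)) = 0 := by
      intro j
      -- the inner sum for index j, factored
      have hfact : ∀ j' : Fin n, ∑ m : Fin M, c (some (j', m)) • v (some (j', m)) =
          (∑ m : Fin M, c (some (j', m)) • (X - C (z j')) ^ (M - (m.1 + 1))) * R j' := by
        intro j'
        rw [Finset.sum_mul]
        exact Finset.sum_congr rfl fun m _ => (smul_mul_assoc _ _ _).symm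
      set P : K[X] := ∑ m : Fin M, c (some (j, m)) • (X - C (z j)) ^ (M - (m.1 + 1)) with hP
      have hdvd : (X - C (z j)) ^ M ∣ P * R j := by
        have hvnone : v none = Φ := rfl
        have : P * R j = - (c none • Φ + ∑ j' ∈ univ.erase j,
            ∑ m : Fin M, c (some (j', m)) • v (some (j', m))) := by
          have h2 := hc
          rw [← Finset.add_sum_erase _ _ (mem_univ j), hfact j, hvnone] at h2
          linear_combination h2
        rw [this]
        rw [dvd_neg]
        apply dvd_add
        · rw [smul_eq_C_mul, hΦsplit j]
          exact (dvd_mul_right _ (R j)).mul_left _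
        · apply Finset.dvd_sum
          intro j' hj'
          rw [hfact j']
          exact (hdvdR j j' (Finset.mem_erase.1 hj').1.symm).mul_left _
      have hPdvd : (X - C (z j)) ^ M ∣ P := by
        exact (prime_X_sub_C (z j)).pow_dvd_of_dvd_mul_right M (hndvd j) hdvd
      have hP0 : P = 0 := by
        refine eq_zero_of_dvd_of_degree_lt hPdvd ?_
        have hdeg : ((X - C (z j)) ^ M).degree = (M : WithBot ℕ) := by
          rw [degree_pow, degree_X_sub_C]; simp
        rw [hdeg]
        refine lt_of_le_of_lt (degree_sum_le _ _) ?_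
        rw [Finset.sup_lt_iff (by exact_mod_cast WithBot.bot_lt_coe M)]
        intro m _
        refine lt_of_le_of_lt (degree_smul_le _ _) ?_
        have hdeg2 : ((X - C (z j)) ^ (M - (m.1 + 1))).degree
            = ((M - (m.1 + 1) : ℕ) : WithBot ℕ) := by
          rw [degree_pow, degree_X_sub_C]; simp
        rw [hdeg2]
        exact_mod_cast (by omega : M - (m.1 + 1) < M)
      -- apply taylor at z j
      have hT : ∑ m : Fin M, c (some (j, m)) • (X : K[X]) ^ (M - (m.1 + 1)) = 0 := by
        have := congrArg (taylor (z j)) hP0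
        rw [map_sum, map_zero] at this
        convert this using 2 with m
        rw [LinearMap.map_smul, taylor_apply, pow_comp, sub_comp, X_comp, C_comp,
          add_sub_cancel_right]
      intro m
      have := congrArg (fun p : K[X] => coeff p (M - (m.1 + 1))) hT
      simp only [finset_sum_coeff, coeff_smul, coeff_X_pow, coeff_zero, smul_eq_mul] at this
      rw [Finset.sum_eq_single m ?_ (fun h => absurd (mem_univ m) h), if_pos rfl, mul_one] at this
      · exact this
      · intro m' _ hm'
        rw [if_neg, mul_zero]
        intro h
        exact hm' (Fin.ext (by omega))
    have hc0 : c none • Φ = 0 := by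
      have h2 := hc
      simp only [key, zero_smul, Finset.sum_const_zero, add_zero] at h2
      exact h2
    have hcnone : c none = 0 := by
      rcases smul_eq_zero.1 hc0 with h | h
      · exact h
      · exact absurd h hmonicΦ.ne_zero
    intro o
    cases o with
    | none => exact hcnone
    | some jm => exact key jm.1 jm.2
  constructor
  · exact hli
  · -- span part
    have hnd : ∀ jm : Fin n × Fin M, (v (some jm)).natDegree = (M - (jm.2.1 + 1)) + (n - 1) * M := by
      intro jm
      show ((X - C (z jm.1)) ^ (M - (jm.2.1 + 1)) * R jm.1).natDegree = _
      rw [Monic.natDegree_mul ((monic_X_sub_C _).pow _) (hmonicR _), natDegree_pow,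
        natDegree_X_sub_C, mul_one, hRdef]
      congr 1
      rw [natDegree_prod_of_monic _ _ fun a _ => (monic_X_sub_C _).pow M]
      simp [natDegree_pow, card_erase_of_mem]
    have hndΦ : Φ.natDegree = n * M := by
      rw [hΦdef, natDegree_prod_of_monic _ _ fun a _ => (monic_X_sub_C _).pow M]
      simp [natDegree_pow]
    have hle : Submodule.span K (Set.range v) ≤ degreeLT K (M * n + 1) := by
      rw [Submodule.span_le]
      rintro p ⟨o, rfl⟩
      rw [SetLike.mem_coe, mem_degreeLT]
      cases o with
      | none =>
        show Φ.degree < _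
        rw [degree_eq_natDegree hmonicΦ.ne_zero, hndΦ]
        exact_mod_cast (by rw [Nat.mul_comm n M]; omega : n * M < M * n + 1)
      | some jm =>
        have hd : degree (v (some jm)) = ((M - (jm.2.1 + 1)) + (n - 1) * M : ℕ) := by
          rw [degree_eq_natDegree (hmonicv jm).ne_zero, hnd jm]
        rw [hd]
        have h1 : M ≤ n * M := Nat.le_mul_of_pos_left M hn
        have h2 : (n - 1) * M + M = n * M := by rw [Nat.sub_one_mul]; omega
        have h3 : M * n = n * M := Nat.mul_comm M n
        have h4 : jm.2.1 < M := jm.2.2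
        exact_mod_cast (by omega : M - (jm.2.1 + 1) + (n - 1) * M < M * n + 1)
    have hfd : FiniteDimensional K (degreeLT K (M * n + 1)) :=
      Module.Finite.equiv (degreeLTEquiv K (M * n + 1)).symm
    refine Submodule.eq_of_le_of_finrank_le hle ?_
    rw [finrank_span_eq_card hli, (degreeLTEquiv K (M * n + 1)).finrank_eq,
      Module.finrank_fin_fun]
    simp [mul_comm M n]
end

section
/- With Φ(x) = ∏_{a=1}^n (x−z_a)^M over a field in which the z_a are distinct, for each i and each m ≥ 1 the derivative of Φ(x)/(x−z_i)^m with respect to x equals (M−m)·Φ(x)/(x−z_i)^{m+1} − M·Σ_{l=1}^{m} (Σ_{j≠i} 1/(z_j−z_i)^l)·Φ(x)/(x−z_i)^{m+1−l} + M·Σ_{j≠i} (1/(z_j−z_i)^m)·Φ(x)/(x−z_j). -/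
open Polynomial Finset

/-- `Φ(x)/(x−z_i)^r` as a polynomial: the exponent of `(x − z_i)` is lowered by `r`. -/
noncomputable def phiQuot {K : Type*} [Field K] (n M : ℕ) (z : Fin n → K)
    (i : Fin n) (r : ℕ) : K[X] :=
  (X - C (z i)) ^ (M - r) * ∏ a ∈ univ.erase i, (X - C (z a)) ^ M

/-- Auxiliary: `Φ/((x−z_i)^M (x−z_j))` as a polynomial. -/
noncomputable def qAux {K : Type*} [Field K] (n M : ℕ) (z : Fin n → K)
    (i j : Fin n) : K[X] :=
  (X - C (z j)) ^ (M - 1) * ∏ a ∈ (univ.erase i).erase j, (X - C (z a)) ^ M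

lemma derivative_finset_prod {ι R : Type*} [CommSemiring R] [DecidableEq ι]
    (s : Finset ι) (f : ι → R[X]) :
    derivative (∏ a ∈ s, f a) = ∑ j ∈ s, (∏ a ∈ s.erase j, f a) * derivative (f j) := by
  induction s using Finset.induction_on with
  | empty => simp
  | insert _ _ ha ih =>
    rename_i a s
    rw [Finset.prod_insert ha, derivative_mul, ih, Finset.sum_insert ha,
      Finset.erase_insert ha, Finset.mul_sum, mul_comm (derivative (f a))]
    congr 1
    apply Finset.sum_congr rfl
    intro j hj
    rw [Finset.erase_insert_of_ne (by rintro rfl; exact ha hj),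
      Finset.prod_insert (fun h => ha (Finset.mem_of_mem_erase h))]
    ring

lemma telescope (K : Type*) [Field K] (M m : ℕ) (hm2 : m ≤ M) (zi d : K) (hd : d ≠ 0) :
    ∑ l ∈ Finset.Icc 1 m, C ((d ^ l)⁻¹) * ((X - C zi) ^ (M - (m + 1 - l)) * ((X - C zi) - C d))
      = C ((d ^ m)⁻¹) * (X - C zi) ^ M - (X - C zi) ^ (M - m) := by
  have h1 : Finset.Icc 1 m = Finset.Ico 1 (m + 1) := by rw [Finset.Ico_add_one_right_eq_Icc]
  rw [h1, Finset.sum_Ico_eq_sum_range]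
  simp only [Nat.add_sub_cancel]
  set f : ℕ → K[X] := fun k => C ((d ^ k)⁻¹) * (X - C zi) ^ (M - m + k) with hf
  have key : ∀ k ∈ Finset.range m,
      C ((d ^ (1 + k))⁻¹) * ((X - C zi) ^ (M - (m + 1 - (1 + k))) * ((X - C zi) - C d))
        = f (k + 1) - f k := by
    intro k hk
    rw [Finset.mem_range] at hk
    have e1 : M - (m + 1 - (1 + k)) = M - m + k := by omega
    have e2 : M - m + (k + 1) = (M - m + k) + 1 := by omega
    have hc : C ((d ^ (1 + k))⁻¹) * C d = C ((d ^ k)⁻¹) := by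
      rw [← C_mul]
      congr 1
      rw [add_comm, pow_succ, mul_inv]
      field_simp
    have e3 : (d ^ (k + 1))⁻¹ = (d ^ (1 + k))⁻¹ := by rw [add_comm]
    calc C ((d ^ (1 + k))⁻¹) * ((X - C zi) ^ (M - (m + 1 - (1 + k))) * ((X - C zi) - C d))
        = C ((d ^ (1 + k))⁻¹) * (X - C zi) ^ (M - m + k) * (X - C zi)
            - (C ((d ^ (1 + k))⁻¹) * C d) * (X - C zi) ^ (M - m + k) := by rw [e1]; ring
      _ = f (k + 1) - f k := by rw [hc, hf]; simp only [e2, pow_succ, e3]; ring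
  rw [Finset.sum_congr rfl key, Finset.sum_range_sub f]
  have hMm : M - m + m = M := by omega
  rw [hf]
  simp [hMm]

/-- For distinct `z_1,…,z_n` in a field `K`, `1 ≤ m ≤ M`,
`(Φ/(x−z_i)^m)' = (M−m)·Φ/(x−z_i)^{m+1}
  − M·Σ_{l=1}^m (Σ_{j≠i} (z_j−z_i)^{−l})·Φ/(x−z_i)^{m+1−l}
  + M·Σ_{j≠i} (z_j−z_i)^{−m}·Φ/(x−z_j)`
(for `m = M` the first term vanishes). -/
theorem stmt10 (K : Type*) [Field K] (n M : ℕ) (hn : 0 < n) (hM : 0 < M)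
    (z : Fin n → K) (hz : Function.Injective z)
    (i : Fin n) (m : ℕ) (hm1 : 1 ≤ m) (hm2 : m ≤ M) :
    derivative (phiQuot n M z i m)
      = ((M - m : ℕ) : K[X]) * phiQuot n M z i (m + 1)
        - (M : K[X]) * ∑ l ∈ Finset.Icc 1 m,
            C (∑ j ∈ univ.erase i, ((z j - z i) ^ l)⁻¹) *
              phiQuot n M z i (m + 1 - l)
        + (M : K[X]) * ∑ j ∈ univ.erase i,
            C (((z j - z i) ^ m)⁻¹) * phiQuot n M z j 1 := by
  classical
  -- P in terms of qAux
  have hPj : ∀ j ∈ univ.erase i,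
      (∏ a ∈ univ.erase i, (X - C (z a)) ^ M) = (X - C (z j)) * qAux n M z i j := by
    intro j hj
    rw [← Finset.mul_prod_erase _ _ hj, qAux]
    have hpow : (X - C (z j) : K[X]) ^ M = (X - C (z j)) * (X - C (z j)) ^ (M - 1) := by
      conv_lhs => rw [show M = 1 + (M - 1) by omega]
      rw [pow_add, pow_one]
    rw [hpow, mul_assoc]
  -- phiQuot j 1 in terms of qAux
  have hphiQj : ∀ j ∈ univ.erase i,
      phiQuot n M z j 1 = (X - C (z i)) ^ M * qAux n M z i j := by
    intro j hj
    have hji : i ∈ univ.erase j := by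
      rw [Finset.mem_erase] at hj ⊢
      exact ⟨fun h => hj.1 h.symm, Finset.mem_univ i⟩
    have hec : ((univ : Finset (Fin n)).erase j).erase i = (univ.erase i).erase j := by
      ext a
      simp only [Finset.mem_erase, Finset.mem_univ, and_true]
      tauto
    unfold phiQuot qAux
    rw [← Finset.mul_prod_erase _ _ hji, hec]
    ring
  -- the derivative computation
  have hD : derivative (phiQuot n M z i m)
      = ((M - m : ℕ) : K[X]) * phiQuot n M z i (m + 1)
        + C (M : K) * ∑ j ∈ univ.erase i, (X - C (z i)) ^ (M - m) * qAux n M z i j := by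
    unfold phiQuot
    rw [derivative_mul, derivative_X_sub_C_pow, derivative_finset_prod]
    have hexp : M - m - 1 = M - (m + 1) := by omega
    rw [hexp, C_eq_natCast]
    congr 1
    · ring
    · rw [Finset.mul_sum, Finset.mul_sum]
      apply Finset.sum_congr rfl
      intro j hj
      rw [derivative_X_sub_C_pow]
      unfold qAux
      ring
  rw [hD]
  -- the per-j partial fraction identity, summed
  have hmain : ∑ j ∈ univ.erase i, (X - C (z i)) ^ (M - m) * qAux n M z i j
      = - ∑ l ∈ Finset.Icc 1 m,
            C (∑ j ∈ univ.erase i, ((z j - z i) ^ l)⁻¹) * phiQuot n M z i (m + 1 - l)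
        + ∑ j ∈ univ.erase i, C (((z j - z i) ^ m)⁻¹) * phiQuot n M z j 1 := by
    have hswap : ∑ l ∈ Finset.Icc 1 m,
          C (∑ j ∈ univ.erase i, ((z j - z i) ^ l)⁻¹) * phiQuot n M z i (m + 1 - l)
        = ∑ j ∈ univ.erase i, ∑ l ∈ Finset.Icc 1 m,
            C (((z j - z i) ^ l)⁻¹) * phiQuot n M z i (m + 1 - l) := by
      rw [Finset.sum_comm]
      apply Finset.sum_congr rfl
      intro l _
      rw [map_sum, Finset.sum_mul]
    rw [hswap, ← Finset.sum_neg_distrib, ← Finset.sum_add_distrib]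
    apply Finset.sum_congr rfl
    intro j hj
    have hjne : z j - z i ≠ 0 := by
      rw [Finset.mem_erase] at hj
      exact sub_ne_zero_of_ne (fun h => hj.1 (hz h))
    have hXj : (X - C (z j) : K[X]) = (X - C (z i)) - C (z j - z i) := by
      rw [map_sub]; ring
    have hsum : ∑ l ∈ Finset.Icc 1 m,
          C (((z j - z i) ^ l)⁻¹) * phiQuot n M z i (m + 1 - l)
        = (∑ l ∈ Finset.Icc 1 m, C (((z j - z i) ^ l)⁻¹) *
            ((X - C (z i)) ^ (M - (m + 1 - l)) * ((X - C (z i)) - C (z j - z i)))) *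
            qAux n M z i j := by
      rw [Finset.sum_mul]
      apply Finset.sum_congr rfl
      intro l _
      unfold phiQuot
      rw [hPj j hj, hXj]
      ring
    rw [hsum, telescope K M m hm2 (z i) (z j - z i) hjne, hphiQj j hj]
    ring
  rw [hmain]
  rw [show (M : K[X]) = C (M : K) from (C_eq_natCast (M : ℕ)).symm]
  ring
end

section
/- Let K be a field of characteristic 0 or characteristic p > M·n, z_1,...,z_n distinct elements, Φ(x)=∏(x−z_a)^M. For each i = 1,...,n there exist unique scalars A_{i,1},...,A_{i,M−1} ∈ K such that the polynomial Q_i(x) = Φ(x)/(x−z_i)^M + Σ_{m=1}^{M−1} A_{i,m}·Φ(x)/(x−z_i)^m has derivative (d/dx)Q_i lying in the span of the n polynomials Φ(x)/(x−z_j), j = 1,...,n. -/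
open Polynomial Finset

noncomputable def triSol {K : Type*} [Field K] (G : ℕ → K) : ℕ → K
  | 0 => 1
  | (k+1) => -(G 0)⁻¹ * ∑ j ∈ (Finset.range (k+1)).attach,
      triSol G j.1 * G (k+1-j.1)
  decreasing_by exact Finset.mem_range.mp j.2

lemma triSol_zero {K : Type*} [Field K] (G : ℕ → K) : triSol G 0 = 1 := by rw [triSol]

lemma triSol_succ {K : Type*} [Field K] (G : ℕ → K) (k : ℕ) :
    triSol G (k+1) = -(G 0)⁻¹ * ∑ j ∈ Finset.range (k+1), triSol G j * G (k+1-j) := by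
  rw [triSol, ← Finset.sum_attach (Finset.range (k+1)) (fun j => triSol G j * G (k+1-j))]

lemma triSol_spec {K : Type*} [Field K] (G : ℕ → K) (hG : G 0 ≠ 0) (k : ℕ) (hk : 1 ≤ k) :
    ∑ j ∈ Finset.range (k+1), triSol G j * G (k-j) = 0 := by
  cases k with
  | zero => omega
  | succ m =>
    rw [Finset.sum_range_succ, Nat.sub_self, triSol_succ]
    field_simp
    ring

lemma triSol_unique {K : Type*} [Field K] (G : ℕ → K) (hG : G 0 ≠ 0) (N : ℕ) (b : ℕ → K)
    (hb0 : b 0 = 1)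
    (hb : ∀ k, 1 ≤ k → k ≤ N → ∑ j ∈ Finset.range (k+1), b j * G (k - j) = 0) :
    ∀ k ≤ N, b k = triSol G k := by
  intro k
  induction k using Nat.strong_induction_on with
  | _ k ih =>
    intro hkN
    match k with
    | 0 => rw [hb0, triSol_zero]
    | (k+1) =>
      have h := hb (k+1) (Nat.le_add_left 1 k) hkN
      rw [Finset.sum_range_succ, Nat.sub_self] at h
      have hsum : ∑ j ∈ Finset.range (k+1), b j * G (k+1-j)
          = ∑ j ∈ Finset.range (k+1), triSol G j * G (k+1-j) := by
        refine Finset.sum_congr rfl fun j hj => ?_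
        have hj' := Finset.mem_range.mp hj
        rw [ih j (by omega) (by omega)]
      rw [hsum] at h
      rw [triSol_succ]
      field_simp
      linear_combination h


noncomputable def bCoef {K : Type*} [Field K] {N : ℕ} (A : Fin N → K) (j : ℕ) : K :=
  if h : 1 ≤ j ∧ j ≤ N then A ⟨N - j, by omega⟩ else if j = 0 then 1 else 0

lemma bCoef_zero {K : Type*} [Field K] {N : ℕ} (A : Fin N → K) : bCoef A 0 = 1 := by
  simp [bCoef]

lemma bCoef_apply {K : Type*} [Field K] {N : ℕ} (A : Fin N → K) (m : Fin N) :
    bCoef A (N - m.1) = A m := by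
  have hm := m.2
  rw [bCoef, dif_pos (by omega)]
  congr 1
  apply Fin.ext
  simp only [Fin.val_mk]
  omega

lemma coeff_fpoly {K : Type*} [Field K] {N : ℕ} (A : Fin N → K) (j : ℕ) :
    (1 + ∑ m : Fin N, C (A m) * X ^ (N - m.1) : K[X]).coeff j = bCoef A j := by
  rw [coeff_add, finset_sum_coeff]
  simp only [coeff_C_mul, coeff_X_pow]
  by_cases hj : 1 ≤ j ∧ j ≤ N
  · rw [bCoef, dif_pos hj, coeff_one, if_neg (by omega), zero_add]
    rw [Finset.sum_eq_single (⟨N - j, by omega⟩ : Fin N)]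
    · rw [if_pos (by simp only [Fin.val_mk]; omega), mul_one]
    · intro m _ hm
      have hm2 := m.2
      rw [if_neg, mul_zero]
      intro h
      apply hm
      apply Fin.ext
      simp only [Fin.val_mk]
      omega
    · intro h; exact absurd (Finset.mem_univ _) h
  · rw [bCoef, dif_neg hj]
    have : ∀ m : Fin N, A m * (if j = N - m.1 then (1:K) else 0) = 0 := by
      intro m
      have := m.2
      rw [if_neg (by omega), mul_zero]
    rw [Finset.sum_congr rfl (fun m _ => this m), Finset.sum_const_zero, add_zero, coeff_one]

section Aux
variable {K : Type*} [Field K] {n M : ℕ} (z : Fin n → K)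

lemma psi_monic : (∏ a : Fin n, (X - C (z a)) ^ (M-1)).Monic :=
  monic_prod_of_monic _ _ (fun a _ => (monic_X_sub_C _).pow _)

lemma psi_natDegree : (∏ a : Fin n, (X - C (z a)) ^ (M-1)).natDegree = (M-1) * n := by
  rw [natDegree_prod_of_monic _ _ (fun a _ => (monic_X_sub_C _).pow _)]
  simp [natDegree_pow, natDegree_X_sub_C, mul_comm]

lemma hj_monic (j : Fin n) : (∏ a ∈ univ.erase j, (X - C (z a))).Monic :=
  monic_prod_of_monic _ _ (fun a _ => monic_X_sub_C _)

lemma hj_natDegree (hn : 0 < n) (j : Fin n) :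
    (∏ a ∈ univ.erase j, (X - C (z a))).natDegree = n - 1 := by
  rw [natDegree_prod_of_monic _ _ (fun a _ => monic_X_sub_C _)]
  simp [natDegree_X_sub_C, Finset.card_erase_of_mem]

lemma phiQuot_one_eq (hM : 0 < M) (j : Fin n) :
    phiQuot n M z j 1 =
      (∏ a : Fin n, (X - C (z a)) ^ (M-1)) * ∏ a ∈ univ.erase j, (X - C (z a)) := by
  rw [phiQuot, ← Finset.mul_prod_erase univ (fun a => (X - C (z a))^(M-1)) (mem_univ j),
    mul_assoc, ← Finset.prod_mul_distrib]
  congr 1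
  refine Finset.prod_congr rfl fun a _ => ?_
  rw [← pow_succ]
  congr 1
  omega

lemma span_char (hn : 0 < n) (hM : 0 < M) (hz : Function.Injective z) (q : K[X]) :
    q ∈ Submodule.span K (Set.range fun j : Fin n => phiQuot n M z j 1) ↔
      (∏ a : Fin n, (X - C (z a)) ^ (M-1)) ∣ q ∧ q.degree < (M * n : ℕ) := by
  set Psi : K[X] := ∏ a : Fin n, (X - C (z a)) ^ (M-1) with hPsi
  constructor
  · intro hq
    have hle : Submodule.span K (Set.range fun j : Fin n => phiQuot n M z j 1) ≤
        (Ideal.span {Psi}).restrictScalars K ⊓ degreeLT K (M*n) := by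
      rw [Submodule.span_le]
      rintro _ ⟨j, rfl⟩
      rw [SetLike.mem_coe, Submodule.mem_inf]
      constructor
      · rw [Submodule.restrictScalars_mem, Ideal.mem_span_singleton]
        exact ⟨_, phiQuot_one_eq z hM j⟩
      · rw [mem_degreeLT]; show (phiQuot n M z j 1).degree < ((M*n : ℕ) : WithBot ℕ); rw [phiQuot_one_eq z hM j,
          degree_eq_natDegree ((psi_monic z).mul (hj_monic z j)).ne_zero,
          Monic.natDegree_mul (psi_monic z) (hj_monic z j), psi_natDegree,
          hj_natDegree z hn]
        refine Nat.cast_lt.mpr ?_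
        have hT : n ≤ M * n := Nat.le_mul_of_pos_left n hM
        rw [Nat.sub_mul, one_mul]
        generalize M * n = T at hT ⊢
        omega
    obtain ⟨h1, h2⟩ := Submodule.mem_inf.mp (hle hq)
    exact ⟨Ideal.mem_span_singleton.mp h1, mem_degreeLT.mp h2⟩
  · rintro ⟨⟨s, rfl⟩, hdeg⟩
    by_cases hs : s = 0
    · simp only [hs, mul_zero]
      exact Submodule.zero_mem _
    have hPsine : Psi ≠ 0 := (psi_monic z).ne_zero
    have hne : Psi * s ≠ 0 := mul_ne_zero hPsine hs
    rw [degree_eq_natDegree hne, natDegree_mul hPsine hs, psi_natDegree] at hdeg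
    have hslt : s.natDegree < n := by
      have h := Nat.cast_lt.mp hdeg
      have hT : n ≤ M * n := Nat.le_mul_of_pos_left n hM
      rw [Nat.sub_mul, one_mul] at h
      generalize M * n = T at h hT
      omega
    have hinj : Set.InjOn z (univ : Finset (Fin n)) := hz.injOn
    have hsd : s.degree < (#(univ : Finset (Fin n)) : ℕ) := by
      rw [card_univ, Fintype.card_fin, degree_eq_natDegree hs]
      exact_mod_cast hslt
    have hrep := Lagrange.eq_interpolate hinj hsd
    rw [Lagrange.interpolate_apply] at hrep
    rw [hrep, Finset.mul_sum]
    refine Submodule.sum_mem _ fun j _ => ?_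
    have hbasis : Lagrange.basis univ z j =
        C (∏ a ∈ univ.erase j, (z j - z a)⁻¹) * ∏ a ∈ univ.erase j, (X - C (z a)) := by
      rw [Lagrange.basis, map_prod, ← Finset.prod_mul_distrib]
      rfl
    rw [hbasis]
    have : Psi * (C (eval (z j) s) * (C (∏ a ∈ univ.erase j, (z j - z a)⁻¹) *
        ∏ a ∈ univ.erase j, (X - C (z a)))) =
        (eval (z j) s * ∏ a ∈ univ.erase j, (z j - z a)⁻¹) • phiQuot n M z j 1 := by
      rw [phiQuot_one_eq z hM j, smul_eq_C_mul, map_mul]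
      ring
    rw [this]
    exact Submodule.smul_mem _ _ (Submodule.subset_span ⟨j, rfl⟩)

end Aux

section Cond
variable {K : Type*} [Field K] {n M : ℕ}

lemma cast_ne_zero_of_char (hchar : ringChar K = 0 ∨ M * n < ringChar K)
    (k : ℕ) (hk1 : 1 ≤ k) (hk2 : k ≤ M * n) : (k : K) ≠ 0 := by
  rcases hchar with h | h
  · have hc : CharP K 0 := h ▸ ringChar.charP K
    haveI : CharZero K := CharP.charP_to_charZero K
    exact Nat.cast_ne_zero.mpr (by omega)
  · intro hk0
    have hdvd : ringChar K ∣ k := (CharP.cast_eq_zero_iff K (ringChar K) k).mp hk0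
    have := Nat.le_of_dvd (by omega) hdvd
    omega

lemma cond_iff (hn : 0 < n) (hM : 0 < M)
    (hchar : ringChar K = 0 ∨ M * n < ringChar K)
    (z : Fin n → K) (hz : Function.Injective z) (i : Fin n) (A : Fin (M-1) → K) :
    (derivative (phiQuot n M z i M + ∑ m : Fin (M-1), C (A m) * phiQuot n M z i (m.1+1))
        ∈ Submodule.span K (Set.range fun j : Fin n => phiQuot n M z j 1))
    ↔ ∀ k, 1 ≤ k → k ≤ M - 1 →
        ∑ j ∈ Finset.range (k+1), bCoef A j *
          (taylor (z i) ((∏ a ∈ univ.erase i, (X - C (z a)))^M)).coeff (k - j) = 0 := by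
  have hMn : M ≤ M * n := Nat.le_mul_of_pos_right M hn
  set g : K[X] := ∏ a ∈ univ.erase i, (X - C (z a)) with hg
  set t : K[X] := X - C (z i) with ht
  set fA : K[X] := 1 + ∑ m : Fin (M-1), C (A m) * t ^ (M - 1 - m.1) with hfA
  have hgmonic : g.Monic := hj_monic z i
  have htmonic : t.Monic := monic_X_sub_C _
  -- rewrite Q as fA * g^M
  have hprodpow : ∀ r, phiQuot n M z i r = t ^ (M - r) * g ^ M := by
    intro r
    rw [phiQuot, Finset.prod_pow]
  have hQ : phiQuot n M z i M + ∑ m : Fin (M-1), C (A m) * phiQuot n M z i (m.1+1)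
      = fA * g ^ M := by
    rw [hfA, add_mul, one_mul, Finset.sum_mul, hprodpow, Nat.sub_self, pow_zero, one_mul]
    congr 1
    refine Finset.sum_congr rfl fun m _ => ?_
    rw [hprodpow, show M - (m.1+1) = M-1-m.1 from by omega, mul_assoc]
  rw [hQ, span_char z hn hM hz]
  -- the degree condition always holds
  have hgM : (g ^ M).degree = ((M * (n-1) : ℕ) : WithBot ℕ) := by
    rw [degree_eq_natDegree (hgmonic.pow M).ne_zero, natDegree_pow, hj_natDegree z hn]
  have hfAdeg : fA.degree ≤ ((M-1) : ℕ) := by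
    rw [hfA]
    refine le_trans (degree_add_le _ _) (max_le ?_ ?_)
    · exact le_trans degree_one_le (by exact_mod_cast Nat.zero_le (M-1))
    · refine le_trans (degree_sum_le _ _) ?_
      rw [Finset.sup_le_iff]
      intro m _
      refine le_trans (degree_mul_le _ _) ?_
      have h1 : (C (A m)).degree ≤ 0 := degree_C_le
      have h2 : (t ^ (M - 1 - m.1)).degree = ((M - 1 - m.1 : ℕ) : WithBot ℕ) := by
        rw [degree_eq_natDegree (htmonic.pow _).ne_zero, natDegree_pow, natDegree_X_sub_C,
          mul_one]
      calc (C (A m)).degree + (t ^ (M - 1 - m.1)).degree ≤ 0 + ((M - 1 - m.1 : ℕ) : WithBot ℕ) := by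
            exact add_le_add h1 (le_of_eq h2)
        _ = ((M - 1 - m.1 : ℕ) : WithBot ℕ) := zero_add _
        _ ≤ ((M-1) : ℕ) := by exact_mod_cast Nat.cast_le.mpr (Nat.sub_le _ _)
  have hdeg : (derivative (fA * g^M)).degree < ((M*n : ℕ) : WithBot ℕ) := by
    refine lt_of_le_of_lt degree_derivative_le ?_
    refine lt_of_le_of_lt (degree_mul_le _ _) ?_
    calc fA.degree + (g^M).degree ≤ (((M-1) : ℕ) : WithBot ℕ) + ((M * (n-1) : ℕ) : WithBot ℕ) :=
          add_le_add hfAdeg (le_of_eq hgM)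
      _ = (((M-1) + M * (n-1) : ℕ) : WithBot ℕ) := by exact_mod_cast rfl
      _ < ((M*n : ℕ) : WithBot ℕ) := by
          refine Nat.cast_lt.mpr ?_
          have h3 : M * (n-1) = M * n - M := by rw [Nat.mul_sub, Nat.mul_one]
          generalize hT : M * n = T at h3 hMn ⊢
          omega
  rw [and_iff_left hdeg]
  -- the divisibility condition reduces to t^(M-1)
  have hPsifact : (∏ a : Fin n, (X - C (z a)) ^ (M-1)) = t^(M-1) * g^(M-1) := by
    rw [← Finset.mul_prod_erase univ (fun a => (X - C (z a))^(M-1)) (mem_univ i),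
      Finset.prod_pow]
  have hcop : IsCoprime (t^(M-1)) (g^(M-1)) := by
    refine IsCoprime.pow ?_
    refine IsCoprime.prod_right fun a ha => ?_
    exact pairwise_coprime_X_sub_C hz (Finset.ne_of_mem_erase ha).symm
  have hgNdvd : g^(M-1) ∣ derivative (fA * g^M) := by
    rw [derivative_mul, derivative_pow]
    refine dvd_add (Dvd.dvd.mul_left (pow_dvd_pow g (by omega)) _) ?_
    have hd : g^(M-1) ∣ g^(M-1) := pow_dvd_pow g (le_refl _)
    exact Dvd.dvd.mul_left (Dvd.dvd.mul_right (Dvd.dvd.mul_left hd _) _) _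
  rw [hPsifact]
  have hdvd_iff : t^(M-1) * g^(M-1) ∣ derivative (fA * g^M) ↔ t^(M-1) ∣ derivative (fA*g^M) :=
    ⟨fun h => (dvd_mul_right _ _).trans h, fun h => hcop.mul_dvd h hgNdvd⟩
  rw [hdvd_iff]
  -- move to taylor coordinates
  have hTt : taylor (z i) t = X := by
    rw [ht, map_sub, taylor_X, taylor_C]
    ring
  have hTt' : taylor (-(z i)) X = t := by
    rw [ht, taylor_X, map_neg, sub_eq_add_neg]
  have key : ∀ p : K[X], t^(M-1) ∣ p ↔ X^(M-1) ∣ taylor (z i) p := by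
    intro p
    constructor
    · rintro ⟨c, rfl⟩
      refine ⟨taylor (z i) c, ?_⟩
      rw [taylor_mul]
      congr 1
      rw [show taylor (z i) (t^(M-1)) = taylorAlgHom (z i) (t^(M-1)) from rfl, map_pow]
      rw [show (taylorAlgHom (z i)) t = taylor (z i) t from rfl, hTt]
    · rintro ⟨c, hc⟩
      have h2 : p = taylor (-(z i)) (taylor (z i) p) := by
        rw [taylor_taylor]
        simp
      rw [h2, hc]
      refine ⟨taylor (-(z i)) c, ?_⟩
      rw [taylor_mul]
      congr 1
      rw [show taylor (-(z i)) (X^(M-1)) = taylorAlgHom (-(z i)) (X^(M-1)) from rfl, map_pow]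
      rw [show (taylorAlgHom (-(z i))) X = taylor (-(z i)) X from rfl, hTt']
  rw [key]
  have hder : taylor (z i) (derivative (fA*g^M)) = derivative (taylor (z i) (fA * g^M)) := by
    rw [taylor_apply, taylor_apply, derivative_comp]
    simp
  rw [hder]
  -- expand taylor of the product
  have hF : taylor (z i) (fA * g^M)
      = (1 + ∑ m : Fin (M-1), C (A m) * X ^ (M - 1 - m.1)) * taylor (z i) (g^M) := by
    rw [taylor_mul]
    congr 1
    rw [hfA]
    rw [show taylor (z i) (1 + ∑ m : Fin (M-1), C (A m) * t ^ (M - 1 - m.1))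
        = taylorAlgHom (z i) (1 + ∑ m : Fin (M-1), C (A m) * t ^ (M - 1 - m.1)) from rfl]
    rw [map_add, map_one, map_sum]
    congr 1
    refine Finset.sum_congr rfl fun m _ => ?_
    rw [map_mul, map_pow]
    rw [show (taylorAlgHom (z i)) (C (A m)) = taylor (z i) (C (A m)) from rfl, taylor_C,
      show (taylorAlgHom (z i)) t = taylor (z i) t from rfl, hTt]
  rw [hF]
  set G : K[X] := taylor (z i) (g^M) with hG
  -- coefficient computation
  rw [X_pow_dvd_iff]
  have hcoeffmul : ∀ k : ℕ, ((1 + ∑ m : Fin (M-1), C (A m) * X ^ (M - 1 - m.1)) * G).coeff k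
      = ∑ j ∈ Finset.range (k+1), bCoef A j * G.coeff (k - j) := by
    intro k
    rw [coeff_mul, Finset.Nat.sum_antidiagonal_eq_sum_range_succ_mk]
    exact Finset.sum_congr rfl fun j _ => by rw [coeff_fpoly]
  constructor
  · intro h k hk1 hkN
    have h2 := h (k-1) (by omega)
    rw [coeff_derivative] at h2
    have h3 : k - 1 + 1 = k := by omega
    rw [h3] at h2
    rw [show ((k - 1 : ℕ) : K) + 1 = ((k : ℕ) : K) from by exact_mod_cast congrArg (Nat.cast : ℕ → K) h3] at h2
    rcases mul_eq_zero.mp h2 with h4 | h4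
    · rw [← hcoeffmul]
      exact h4
    · exact absurd h4 (cast_ne_zero_of_char hchar k hk1 (by omega))
  · intro h d hd
    rw [coeff_derivative, hcoeffmul, h (d+1) (by omega) (by omega), zero_mul]

end Cond

/-- Over a field of characteristic `0` or `p > M·n`, for each `i`
there are unique scalars `A_1, …, A_{M−1}` such that
`Q_i = Φ/(x−z_i)^M + Σ_{m=1}^{M−1} A_m·Φ/(x−z_i)^m` has derivative in the span
of the polynomials `Φ/(x−z_j)`, `j = 1,…,n`. -/
theorem stmt11 (K : Type*) [Field K] (n M : ℕ) (hn : 0 < n) (hM : 0 < M)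
    (hchar : ringChar K = 0 ∨ M * n < ringChar K)
    (z : Fin n → K) (hz : Function.Injective z) (i : Fin n) :
    ∃! A : Fin (M - 1) → K,
      derivative (phiQuot n M z i M +
          ∑ m : Fin (M - 1), C (A m) * phiQuot n M z i (m.1 + 1))
        ∈ Submodule.span K (Set.range fun j : Fin n => phiQuot n M z j 1) := by
  set Gc : ℕ → K := fun j => (taylor (z i) ((∏ a ∈ univ.erase i, (X - C (z a)))^M)).coeff j
    with hGc
  have hG0 : Gc 0 ≠ 0 := by
    rw [hGc]
    simp only [taylor_coeff_zero, eval_pow, eval_prod, eval_sub, eval_X, eval_C]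
    refine pow_ne_zero _ (Finset.prod_ne_zero_iff.mpr fun a ha => ?_)
    rw [sub_ne_zero]
    exact fun h => (Finset.mem_erase.mp ha).1 (hz h).symm
  refine ⟨fun m => triSol Gc ((M-1) - m.1), ?_, ?_⟩
  · refine (cond_iff hn hM hchar z hz i _).mpr ?_
    intro k hk1 hkN
    have hcongr : ∀ j ∈ Finset.range (k+1),
        bCoef (fun m : Fin (M-1) => triSol Gc ((M-1) - m.1)) j * Gc (k-j)
          = triSol Gc j * Gc (k-j) := by
      intro j hj
      have hj' := Finset.mem_range.mp hj
      congr 1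
      by_cases h0 : j = 0
      · subst h0
        rw [bCoef_zero, triSol_zero]
      · have h1 : 1 ≤ j ∧ j ≤ M - 1 := ⟨by omega, by omega⟩
        rw [bCoef, dif_pos h1]
        simp only [Fin.val_mk]
        congr 1
        omega
    calc ∑ j ∈ Finset.range (k+1),
          bCoef (fun m : Fin (M-1) => triSol Gc ((M-1) - m.1)) j * Gc (k-j)
        = ∑ j ∈ Finset.range (k+1), triSol Gc j * Gc (k-j) :=
          Finset.sum_congr rfl hcongr
      _ = 0 := triSol_spec Gc hG0 k hk1
  · intro A hA
    have hA' := (cond_iff hn hM hchar z hz i A).mp hA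
    have hb := triSol_unique Gc hG0 (M-1) (bCoef A) (bCoef_zero A) hA'
    funext m
    have hm := m.2
    have e1 : A m = bCoef A ((M-1) - m.1) := (bCoef_apply A m).symm
    rw [e1, hb _ (by omega)]
end

section
/- Suppose F(x) is a polynomial of degree at most Mn over a field K (with z_1,...,z_n distinct and 1,...,M invertible in K) whose derivative dF/dx equals Σ_{j=1}^n A_j·Φ(x)/(x−z_j) for some scalars A_j ∈ K. Then there exist unique scalars D_0, D_1,...,D_n ∈ K with F(x) = D_0·Φ(x) + Σ_{j=1}^n D_j·Q_j(x), where Q_j are the polynomials from the preceding lemma. -/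
open Polynomial Finset

section Aux

variable {K : Type*} [Field K]

lemma aux_key0 (M : ℕ) (hch : ∀ m : ℕ, 1 ≤ m → m ≤ M → (m : K) ≠ 0)
    (g : K[X]) (h1 : X ^ (M - 1) ∣ derivative g) (h2 : g.coeff 0 = 0) :
    X ^ M ∣ g := by
  rw [Polynomial.X_pow_dvd_iff] at h1 ⊢
  intro d hd
  rcases Nat.eq_zero_or_pos d with rfl | hd0
  · exact h2
  · have h3 := h1 (d - 1) (by omega)
    rw [coeff_derivative] at h3
    have hd1 : d - 1 + 1 = d := by omega
    rw [hd1] at h3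
    have hcast : ((d - 1 : ℕ) : K) + 1 = (d : K) := by
      rw [← Nat.cast_add_one, hd1]
    rw [hcast] at h3
    rcases mul_eq_zero.1 h3 with h | h
    · exact h
    · exact absurd h (hch d hd0 (by omega))

lemma aux_keyc (M : ℕ) (hch : ∀ m : ℕ, 1 ≤ m → m ≤ M → (m : K) ≠ 0)
    (c : K) (g : K[X]) (h1 : (X - C c) ^ (M - 1) ∣ derivative g)
    (h2 : g.eval c = 0) : (X - C c) ^ M ∣ g := by
  have hder : derivative (taylor c g) = taylor c (derivative g) := by
    simp [taylor_apply, derivative_comp]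
  have ht : X ^ M ∣ taylor c g := by
    apply aux_key0 M hch
    · obtain ⟨h, hh⟩ := h1
      rw [hder, hh, taylor_apply, mul_comp, pow_comp, sub_comp, X_comp, C_comp]
      simp only [add_sub_cancel_right]
      exact Dvd.intro _ rfl
    · rw [coeff_zero_eq_eval_zero, taylor_apply, eval_comp]
      simpa using h2
  obtain ⟨h, hh⟩ := ht
  have hg : (taylor c g).comp (X - C c) = g := by
    rw [taylor_apply, comp_assoc]
    simp
  rw [← hg, hh, mul_comp, pow_comp, X_comp]
  exact Dvd.intro _ rfl

lemma aux_span_dvd {ι : Type*} (P : K[X]) (f : ι → K[X])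
    (hf : ∀ i, P ∣ f i) {g : K[X]}
    (hg : g ∈ Submodule.span K (Set.range f)) : P ∣ g := by
  induction hg using Submodule.span_induction with
  | mem x hx => obtain ⟨i, rfl⟩ := hx; exact hf i
  | zero => exact dvd_zero _
  | add x y _ _ hx hy => exact dvd_add hx hy
  | smul a x _ hx => rw [Polynomial.smul_eq_C_mul]; exact hx.mul_left _

lemma aux_derivative_finset_prod {ι : Type*} [DecidableEq ι] (s : Finset ι)
    (f : ι → K[X]) :
    derivative (∏ a ∈ s, f a) =
      ∑ b ∈ s, (∏ a ∈ s.erase b, f a) * derivative (f b) := by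
  induction s using Finset.induction_on with
  | empty => simp
  | @insert x s hx ih =>
    rw [prod_insert hx, derivative_mul, ih, sum_insert hx, erase_insert hx,
      mul_sum]
    congr 1
    · ring
    · apply Finset.sum_congr rfl
      intro b hb
      have hbx : b ≠ x := by rintro rfl; exact hx hb
      rw [Finset.erase_insert_of_ne hbx.symm, prod_insert (fun h => hx (Finset.mem_of_mem_erase h))]
      ring

end Aux

/-- If `F` has degree ≤ Mn and `F' = Σ_j A_j·Φ/(x−z_j)`, then `F`
is uniquely a linear combination `F = D_0·Φ + Σ_j D_j·Q_j`, where the `Q_j` are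
the polynomials `Φ/(x−z_j)^M + Σ_{m=1}^{M−1} A_{j,m}·Φ/(x−z_j)^m` whose
derivatives lie in the span of the `Φ/(x−z_i)`. -/
theorem stmt13 (K : Type*) [Field K] (n M : ℕ) (hn : 0 < n) (hM : 0 < M)
    (hchar : ∀ m : ℕ, 1 ≤ m → m ≤ M → (m : K) ≠ 0)
    (z : Fin n → K) (hz : Function.Injective z)
    (Q : Fin n → K[X])
    (hQform : ∀ j, ∃ A : Fin (M - 1) → K,
      Q j = phiQuot n M z j M +
        ∑ m : Fin (M - 1), C (A m) * phiQuot n M z j (m.1 + 1))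
    (hQder : ∀ j, derivative (Q j)
      ∈ Submodule.span K (Set.range fun i : Fin n => phiQuot n M z i 1))
    (F : K[X]) (hF : F.degree ≤ (M * n : ℕ))
    (A : Fin n → K)
    (hdF : derivative F = ∑ j : Fin n, C (A j) * phiQuot n M z j 1) :
    ∃! Dc : K × (Fin n → K),
      F = C Dc.1 * ∏ a : Fin n, (X - C (z a)) ^ M +
        ∑ j : Fin n, C (Dc.2 j) * Q j := by
  classical
  set Φ : K[X] := ∏ a : Fin n, (X - C (z a)) ^ M with hΦdef
  -- basic facts about Φ
  have hΦm : Φ.Monic := monic_prod_of_monic _ _ fun a _ => (monic_X_sub_C _).pow M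
  have hΦnatdeg : Φ.natDegree = M * n := by
    rw [hΦdef, natDegree_prod _ _ (fun a _ => pow_ne_zero _ (X_sub_C_ne_zero _))]
    simp [natDegree_pow, natDegree_X_sub_C, Fintype.card_fin, mul_comm]
  have hΦdeg : Φ.degree = (M * n : ℕ) := by
    rw [degree_eq_natDegree hΦm.ne_zero, hΦnatdeg]
  have hmn : M * n = M * (n - 1) + M := by
    conv_lhs => rw [← Nat.succ_pred_eq_of_pos hn]
    rw [Nat.mul_succ]
    rfl
  -- phiQuot facts
  have hpm : ∀ (j : Fin n) (r : ℕ), (phiQuot n M z j r).Monic := fun j r =>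
    ((monic_X_sub_C _).pow _).mul
      (monic_prod_of_monic _ _ fun a _ => (monic_X_sub_C _).pow M)
  have hpnd : ∀ (j : Fin n) (r : ℕ), (phiQuot n M z j r).natDegree
      = (M - r) + M * (n - 1) := by
    intro j r
    rw [phiQuot, Polynomial.Monic.natDegree_mul ((monic_X_sub_C _).pow _)
      (monic_prod_of_monic _ _ fun a _ => (monic_X_sub_C _).pow M),
      natDegree_pow, natDegree_X_sub_C, mul_one,
      natDegree_prod _ _ (fun a _ => pow_ne_zero _ (X_sub_C_ne_zero _))]
    simp only [natDegree_pow, natDegree_X_sub_C, mul_one, Finset.sum_const, smul_eq_mul]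
    rw [Finset.card_erase_of_mem (mem_univ j), Finset.card_univ, Fintype.card_fin,
      mul_comm]
  have hpdeg : ∀ (j : Fin n) (r : ℕ), 1 ≤ r → r ≤ M →
      (phiQuot n M z j r).degree < ((M * n : ℕ) : WithBot ℕ) := by
    intro j r h1 h2
    rw [degree_eq_natDegree (hpm j r).ne_zero, hpnd j r]
    exact_mod_cast (by omega : (M - r) + M * (n - 1) < M * n)
  -- degree of Q j
  have hQdeg : ∀ j, (Q j).degree < ((M * n : ℕ) : WithBot ℕ) := by
    intro j
    obtain ⟨B, hB⟩ := hQform j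
    rw [hB]
    refine lt_of_le_of_lt (degree_add_le _ _) (max_lt (hpdeg j M hM le_rfl) ?_)
    refine lt_of_le_of_lt (degree_sum_le _ _) ?_
    rw [Finset.sup_lt_iff (by exact_mod_cast WithBot.bot_lt_coe (M * n))]
    intro m _
    calc (C (B m) * phiQuot n M z j (m.1 + 1)).degree
        ≤ (C (B m)).degree + (phiQuot n M z j (m.1 + 1)).degree := degree_mul_le _ _
      _ ≤ 0 + (phiQuot n M z j (m.1 + 1)).degree := add_le_add degree_C_le le_rfl
      _ = (phiQuot n M z j (m.1 + 1)).degree := by rw [zero_add]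
      _ < ((M * n : ℕ) : WithBot ℕ) := hpdeg j (m.1 + 1) (by omega) (by omega)
  have hQcoeff : ∀ j, (Q j).coeff (M * n) = 0 := fun j =>
    coeff_eq_zero_of_degree_lt (hQdeg j)
  -- evaluation facts
  have hevalPhi0 : ∀ (i j : Fin n) (r : ℕ), i ≠ j →
      (phiQuot n M z j r).eval (z i) = 0 := by
    intro i j r hij
    rw [phiQuot, eval_mul, eval_prod]
    rw [Finset.prod_eq_zero (Finset.mem_erase.2 ⟨hij, mem_univ i⟩)
      (by simp [zero_pow hM.ne'])]
    ring
  have hevalPhiSelf0 : ∀ (j : Fin n) (r : ℕ), r < M →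
      (phiQuot n M z j r).eval (z j) = 0 := by
    intro j r hr
    rw [phiQuot, eval_mul, eval_pow]
    simp [zero_pow (by omega : M - r ≠ 0)]
  set w : Fin n → K := fun j => ∏ a ∈ univ.erase j, (z j - z a) ^ M with hwdef
  have hw : ∀ j, w j ≠ 0 := by
    intro j
    refine Finset.prod_ne_zero_iff.2 fun a ha => pow_ne_zero _ (sub_ne_zero.2 ?_)
    exact fun h => (Finset.mem_erase.1 ha).1 (hz h.symm)
  have hevalQself : ∀ j, (Q j).eval (z j) = w j := by
    intro j
    obtain ⟨B, hB⟩ := hQform j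
    rw [hB, eval_add, eval_finset_sum]
    rw [Finset.sum_eq_zero (fun m _ => by
      rw [eval_mul, hevalPhiSelf0 j (m.1 + 1) (by omega)]; ring)]
    rw [add_zero, phiQuot, eval_mul, eval_pow, Nat.sub_self, pow_zero, eval_prod]
    simp [hwdef]
  have hevalQ0 : ∀ i j, i ≠ j → (Q j).eval (z i) = 0 := by
    intro i j hij
    obtain ⟨B, hB⟩ := hQform j
    rw [hB, eval_add, eval_finset_sum, hevalPhi0 i j M hij]
    rw [Finset.sum_eq_zero (fun m _ => by
      rw [eval_mul, hevalPhi0 i j (m.1 + 1) hij]; ring)]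
    ring
  have hΦeval : ∀ i, Φ.eval (z i) = 0 := by
    intro i
    rw [hΦdef, eval_prod]
    exact Finset.prod_eq_zero (mem_univ i) (by simp [zero_pow hM.ne'])
  have hΦcoeff : Φ.coeff (M * n) = 1 := by
    rw [← hΦnatdeg]; exact hΦm.coeff_natDegree
  -- the candidate coefficients
  set D0 : K := F.coeff (M * n) with hD0def
  set D : Fin n → K := fun j => F.eval (z j) / w j with hDdef
  -- generic computations: for any pair (c, E) the coefficient and evaluations
  have keyCoeff : ∀ (c : K) (E : Fin n → K),
      (C c * Φ + ∑ j : Fin n, C (E j) * Q j).coeff (M * n) = c := by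
    intro c E
    rw [coeff_add, coeff_C_mul, hΦcoeff, finset_sum_coeff]
    rw [Finset.sum_eq_zero (fun j _ => by rw [coeff_C_mul, hQcoeff j, mul_zero])]
    ring
  have keyEval : ∀ (c : K) (E : Fin n → K) (i : Fin n),
      (C c * Φ + ∑ j : Fin n, C (E j) * Q j).eval (z i) = E i * w i := by
    intro c E i
    rw [eval_add, eval_mul, hΦeval i, eval_finset_sum]
    rw [Finset.sum_eq_single i
      (fun j _ hji => by rw [eval_mul, hevalQ0 i j (fun h => hji h.symm), mul_zero])
      (fun h => absurd (mem_univ i) h)]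
    rw [eval_mul, eval_C, hevalQself i]
    ring_nf
    rw [eval_C]
    ring
  -- existence: consider the remainder G
  set G : K[X] := F - (C D0 * Φ + ∑ j : Fin n, C (D j) * Q j) with hGdef
  have hGcoeff : ∀ m : ℕ, M * n ≤ m → G.coeff m = 0 := by
    intro m hm
    rcases eq_or_lt_of_le hm with rfl | hlt
    · rw [hGdef, coeff_sub, keyCoeff, ← hD0def, sub_self]
    · have hmlt : ((M * n : ℕ) : WithBot ℕ) < (m : ℕ) := by exact_mod_cast hlt
      rw [hGdef, coeff_sub, coeff_add, coeff_C_mul, finset_sum_coeff]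
      rw [coeff_eq_zero_of_degree_lt (lt_of_le_of_lt hF hmlt),
        coeff_eq_zero_of_degree_lt (hΦdeg ▸ hmlt),
        Finset.sum_eq_zero (fun j _ => by
          rw [coeff_C_mul, coeff_eq_zero_of_degree_lt ((hQdeg j).trans hmlt), mul_zero])]
      ring
  have hGdeg : G.degree < ((M * n : ℕ) : WithBot ℕ) :=
    (degree_lt_iff_coeff_zero G (M * n)).2 (fun m hm => hGcoeff m (by exact_mod_cast hm))
  have hGeval : ∀ i, G.eval (z i) = 0 := by
    intro i
    rw [hGdef, eval_sub, keyEval, hDdef]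
    simp only
    rw [div_mul_cancel₀ _ (hw i), sub_self]
  -- derivative of G lies in the span
  set S : Submodule K K[X] :=
    Submodule.span K (Set.range fun i : Fin n => phiQuot n M z i 1) with hSdef
  have hmemspan : ∀ i : Fin n, phiQuot n M z i 1 ∈ S :=
    fun i => Submodule.subset_span ⟨i, rfl⟩
  have hsmulmem : ∀ (c : K) (p : K[X]), p ∈ S → C c * p ∈ S := by
    intro c p hp
    rw [← Polynomial.smul_eq_C_mul]
    exact Submodule.smul_mem _ _ hp
  have hΦder : derivative Φ ∈ S := by
    rw [hΦdef, aux_derivative_finset_prod]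
    refine Submodule.sum_mem _ fun b _ => ?_
    rw [derivative_X_sub_C_pow]
    have : (∏ a ∈ univ.erase b, (X - C (z a)) ^ M) * (C (M : K) * (X - C (z b)) ^ (M - 1))
        = C (M : K) * phiQuot n M z b 1 := by
      rw [phiQuot]; ring
    rw [this]
    exact hsmulmem _ _ (hmemspan b)
  have hGder : derivative G ∈ S := by
    rw [hGdef, derivative_sub, derivative_add, derivative_C_mul, derivative_sum]
    refine Submodule.sub_mem _ ?_ (Submodule.add_mem _ (hsmulmem _ _ hΦder) ?_)
    · rw [hdF]
      exact Submodule.sum_mem _ fun j _ => hsmulmem _ _ (hmemspan j)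
    · refine Submodule.sum_mem _ fun j _ => ?_
      rw [derivative_C_mul]
      exact hsmulmem _ _ (hQder j)
  -- divisibility of derivative G by ∏ (X - z a)^(M-1)
  set P : K[X] := ∏ a : Fin n, (X - C (z a)) ^ (M - 1) with hPdef
  have hPdvd : ∀ i : Fin n, P ∣ phiQuot n M z i 1 := by
    intro i
    refine ⟨∏ a ∈ univ.erase i, (X - C (z a)), ?_⟩
    rw [phiQuot, hPdef, ← Finset.mul_prod_erase univ _ (mem_univ i), mul_assoc,
      ← Finset.prod_mul_distrib]
    congr 1
    refine Finset.prod_congr rfl fun a _ => ?_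
    rw [← pow_succ, Nat.sub_add_cancel hM]
  have hPG : P ∣ derivative G := aux_span_dvd P _ hPdvd hGder
  -- each (X - z i)^M divides G
  have hdvd : ∀ i : Fin n, (X - C (z i)) ^ M ∣ G := by
    intro i
    apply aux_keyc M hchar
    · exact dvd_trans (dvd_trans (pow_dvd_pow _ le_rfl)
        (Finset.dvd_prod_of_mem (fun a => (X - C (z a)) ^ (M - 1)) (mem_univ i))) hPG
    · exact hGeval i
  have hΦG : Φ ∣ G := by
    rw [hΦdef]
    refine Fintype.prod_dvd_of_coprime ?_ hdvd
    intro i j hij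
    exact ((pairwise_coprime_X_sub_C hz) hij).pow
  have hG0 : G = 0 := eq_zero_of_dvd_of_degree_lt hΦG (hΦdeg ▸ hGdeg)
  have hFeq : F = C D0 * Φ + ∑ j : Fin n, C (D j) * Q j := sub_eq_zero.1 hG0
  refine ⟨(D0, D), hFeq, ?_⟩
  rintro ⟨c, E⟩ hp
  have hc : c = D0 := by
    rw [hD0def, hp, keyCoeff]
  have hE : E = D := by
    funext i
    rw [hDdef]
    simp only
    rw [hp, keyEval]
    rw [mul_div_cancel_right₀ _ (hw i)]
  rw [hc, hE]
end

section
/- Let p, q be primes with p > q, n = kq+1 with p > n, a the unique integer with 1 ≤ a < q and q | (ap−1), M = (ap−1)/q. Over the field F_p(z) of rational functions in z_1,...,z_n, the intersection of the n-dimensional space Ω_log = span{Φ(x,z)/(x−z_j) : j=1,...,n} with the image of the derivative map ∂/∂x on polynomials in x of degree at most Mn has dimension (q−a)·k + 1. -/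
open Polynomial Finset

lemma coeff_X_pow_sub_one_pow {R : Type*} [CommRing R] (n m e : ℕ) (hn : 0 < n) :
    ((X ^ n - 1 : R[X]) ^ m).coeff e =
      if n ∣ e ∧ e / n ≤ m then (-1 : R) ^ (m - e / n) * (m.choose (e / n) : R) else 0 := by
  have hexp : (X ^ n - 1 : R[X]) ^ m =
      ∑ i ∈ Finset.range (m + 1),
        C ((-1 : R) ^ (m - i) * (m.choose i : R)) * (X : R[X]) ^ (n * i) := by
    rw [sub_eq_add_neg, add_pow]
    refine Finset.sum_congr rfl fun i hi => ?_
    rw [← pow_mul]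
    push_cast [map_mul, map_pow, map_neg, map_one]
    rw [Polynomial.C_eq_natCast]
    ring
  rw [hexp, finset_sum_coeff]
  simp only [coeff_C_mul, coeff_X_pow]
  by_cases h : n ∣ e ∧ e / n ≤ m
  · have he : n * (e / n) = e := Nat.mul_div_cancel' h.1
    rw [if_pos h, Finset.sum_eq_single (e / n)]
    · rw [if_pos he.symm, mul_one]
    · intro i hi hne
      have : ¬ (e = n * i) := by
        intro hh
        exact hne (by rw [hh, Nat.mul_div_cancel_left _ hn])
      simp [this]
    · intro hmem; exact absurd (Finset.mem_range.mpr (Nat.lt_succ_of_le h.2)) hmem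
  · rw [if_neg h]
    apply Finset.sum_eq_zero
    intro i hi
    have : ¬ (e = n * i) := by
      rintro rfl
      exact h ⟨⟨i, rfl⟩, by
        rw [Nat.mul_div_cancel_left _ hn]
        exact Nat.lt_succ_iff.mp (Finset.mem_range.mp hi)⟩
    simp [this]

lemma mem_map_derivative_iff {K : Type*} [Field K] (p : ℕ) [Fact p.Prime] [CharP K p]
    (D : ℕ) (hD : 0 < D) (f : K[X]) :
    f ∈ Submodule.map (Polynomial.derivative (R := K)) (degreeLT K (D + 1)) ↔
      f ∈ degreeLT K D ∧ ∀ j, j < D → p ∣ (j + 1) → f.coeff j = 0 := by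
  constructor
  · rintro ⟨g, hg, rfl⟩
    rw [SetLike.mem_coe, mem_degreeLT] at hg
    constructor
    · rw [mem_degreeLT]
      refine (degree_lt_iff_coeff_zero _ _).mpr fun m hm => ?_
      rw [coeff_derivative]
      have hgm : g.coeff (m + 1) = 0 := by
        apply coeff_eq_zero_of_degree_lt
        refine lt_of_lt_of_le hg ?_
        exact_mod_cast Nat.succ_le_succ (by exact_mod_cast hm)
      simp [hgm]
    · intro j hj hdvd
      rw [coeff_derivative]
      have hz : ((j : K) + 1) = 0 := by
        have h1 := (CharP.cast_eq_zero_iff K p (j + 1)).mpr hdvd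
        push_cast at h1
        exact h1
      rw [hz, mul_zero]
  · rintro ⟨hdeg, hvan⟩
    rw [mem_degreeLT] at hdeg
    refine ⟨∑ j ∈ Finset.range D, C (f.coeff j * (((j : K) + 1))⁻¹) * X ^ (j + 1), ?_, ?_⟩
    · apply Submodule.sum_mem
      intro j hj
      rw [mem_degreeLT]
      refine lt_of_le_of_lt (degree_C_mul_X_pow_le _ _) ?_
      exact_mod_cast Nat.succ_lt_succ (Finset.mem_range.mp hj)
    · rw [derivative_sum]
      have hterm : ∀ j ∈ Finset.range D,
          derivative (C (f.coeff j * (((j : K) + 1))⁻¹) * X ^ (j + 1)) =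
            C (f.coeff j) * X ^ j := by
        intro j hj
        rw [derivative_C_mul_X_pow]
        simp only [Nat.add_sub_cancel]
        congr 1
        push_cast
        by_cases hp : p ∣ (j + 1)
        · have h0 : f.coeff j = 0 := hvan j (Finset.mem_range.mp hj) hp
          simp [h0]
        · have hz : ((j : K) + 1) ≠ 0 := by
            intro h1
            apply hp
            rw [← CharP.cast_eq_zero_iff K p (j + 1)]
            push_cast
            exact h1
          field_simp
      rw [Finset.sum_congr rfl hterm]
      have hnd : f.natDegree < D := by
        rcases eq_or_ne f 0 with rfl | hf
        · simpa using hD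
        · exact (natDegree_lt_iff_degree_lt hf).mpr hdeg
      conv_rhs => rw [f.as_sum_range' D hnd]
      refine Finset.sum_congr rfl fun j _ => ?_
      rw [C_mul_X_pow_eq_monomial]

set_option maxHeartbeats 1600000 in
set_option synthInstance.maxHeartbeats 400000 in
theorem stmt14_aux (p q n k a M : ℕ) [Fact p.Prime] (hq : q.Prime)
    (hk : 0 < k) (hn : n = k * q + 1) (hpn : p > n) (hpq : p > q)
    (ha1 : 1 ≤ a) (ha2 : a < q) (hdvd : q ∣ (a * p - 1))
    (hM : M = (a * p - 1) / q) :
    Module.finrank (FractionRing (MvPolynomial (Fin n) (ZMod p)))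
      ↥(Submodule.span (FractionRing (MvPolynomial (Fin n) (ZMod p)))
          (Set.range fun j : Fin n => phiQuot n M
            (fun j => algebraMap (MvPolynomial (Fin n) (ZMod p)) _ (MvPolynomial.X j)) j 1) ⊓
        Submodule.map
          (Polynomial.derivative (R := FractionRing (MvPolynomial (Fin n) (ZMod p))))
          (Polynomial.degreeLT (FractionRing (MvPolynomial (Fin n) (ZMod p))) (M * n + 1)))
      = (q - a) * k + 1 := by
  classical
  have hp : p.Prime := Fact.out
  have hp2 : 2 ≤ p := hp.two_le
  have hn1 : 0 < n := by omega
  have hq1 : 0 < q := hq.pos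
  -- arithmetic facts
  have hqM : q * M + 1 = a * p := by
    obtain ⟨c, hc⟩ := hdvd
    have hap : 0 < a * p := Nat.mul_pos (by omega) hp.pos
    have hMc : M = c := by rw [hM, hc, Nat.mul_div_cancel_left _ hq1]
    subst hMc
    omega
  have hkM : k < M := by
    have h1 : p ≤ a * p := Nat.le_mul_of_pos_left p (by omega)
    have hcomm : k * q = q * k := Nat.mul_comm _ _
    have h3 : q * k < q * M := by omega
    exact Nat.lt_of_mul_lt_mul_left h3
  have hMp : M < p := by
    have h1 : a * p < q * p := (Nat.mul_lt_mul_right hp.pos).mpr ha2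
    have h2 : q * M < q * p := by omega
    exact Nat.lt_of_mul_lt_mul_left h2
  have hMn : M * n + k = a * k * p + M := by
    calc M * n + k = k * (q * M + 1) + M := by rw [hn]; ring
    _ = k * (a * p) + M := by rw [hqM]
    _ = a * k * p + M := by ring
  have hakn : a * k < n := by
    have h1 : (a + 1) * k ≤ q * k := Nat.mul_le_mul_right k (by omega)
    have h2 : (a + 1) * k = a * k + k := by ring
    have h3 : q * k = k * q := Nat.mul_comm _ _
    omega
  have hak1 : 0 < a * k := Nat.mul_pos (by omega) hk
  have hcut : ∀ t' : ℕ, 1 ≤ t' → t' ≤ a * k → p * t' ≤ M * n := by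
    intro t' h1 h2
    have h3 : p * t' ≤ p * (a * k) := Nat.mul_le_mul_left p h2
    have h4 : p * (a * k) = a * k * p := by ring
    omega
  have hdec : ∀ j : ℕ, j < M * n → p ∣ (j + 1) →
      ∃ t' : ℕ, 1 ≤ t' ∧ t' ≤ a * k ∧ j + 1 = p * t' := by
    intro j hj hdvdj
    obtain ⟨t', ht'⟩ := hdvdj
    have ht0 : t' ≠ 0 := by
      rintro rfl
      rw [Nat.mul_zero] at ht'
      omega
    refine ⟨t', by omega, ?_, ht'⟩
    by_contra hgt
    push_neg at hgt
    have h5 : p * (a * k + 1) ≤ p * t' := Nat.mul_le_mul_left p (by omega)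
    have h6 : p * (a * k + 1) = a * k * p + p := by ring
    omega
  -- setup
  set R := MvPolynomial (Fin n) (ZMod p) with hR
  set K := FractionRing R with hKdef
  have hinj : Function.Injective (algebraMap R K) := IsFractionRing.injective R K
  haveI : CharP K p := charP_of_injective_ringHom hinj p
  set z : Fin n → K := fun j => algebraMap R K (MvPolynomial.X j) with hz
  set P : Fin n → K[X] := fun j => phiQuot n M z j 1 with hP
  set Q : Fin n → R[X] := fun j => (X - C (MvPolynomial.X j)) ^ (M - 1) *
      ∏ i ∈ univ.erase j, (X - C (MvPolynomial.X i)) ^ M with hQ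
  have hPQ : ∀ j, P j = (Q j).map (algebraMap R K) := by
    intro j
    simp only [hP, hQ, phiQuot, Polynomial.map_mul, Polynomial.map_pow, Polynomial.map_sub,
      Polynomial.map_X, Polynomial.map_C, Polynomial.map_prod, hz]
  set d : Fin (a * k) → ℕ := fun t => p * ((t : ℕ) + 1) - 1 with hd
  have hdge : ∀ t, p ≤ p * ((t : ℕ) + 1) := fun t => Nat.le_mul_of_pos_right p (by omega)
  have hdlt : ∀ t, d t < M * n := by
    intro t
    have h1 := hcut ((t : ℕ) + 1) (by omega) (by have := t.2; omega)
    have h2 := hdge t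
    simp only [hd]
    omega
  have hddvd : ∀ t, p ∣ (d t + 1) := by
    intro t
    refine ⟨(t : ℕ) + 1, ?_⟩
    have := hdge t
    simp only [hd]
    omega
  set φ : (Fin n → K) →ₗ[K] K[X] := Fintype.linearCombination K P with hφ
  set ξ : K[X] →ₗ[K] (Fin (a * k) → K) := LinearMap.pi (fun t => lcoeff K (d t)) with hξ
  set ψ := ξ.comp φ with hψdef
  set A : Matrix (Fin (a * k)) (Fin n) K := Matrix.of (fun t j => (P j).coeff (d t)) with hA
  have hφapp : ∀ c, φ c = ∑ j, c j • P j := fun c => rfl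
  have hψcoeff : ∀ c t, ψ c t = (φ c).coeff (d t) := fun c t => rfl
  have hψmat : ∀ c, ψ c = A.mulVec c := by
    intro c
    funext t
    rw [hψcoeff, hφapp, finset_sum_coeff]
    simp only [coeff_smul, smul_eq_mul]
    simp only [Matrix.mulVec, dotProduct, hA, Matrix.of_apply]
    exact Finset.sum_congr rfl fun j _ => mul_comm _ _
  -- degrees
  have hmonicP : ∀ j, (P j).Monic := by
    intro j
    rw [hP]
    exact ((monic_X_sub_C _).pow _).mul
      (monic_prod_of_monic _ _ fun i _ => (monic_X_sub_C _).pow _)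
  have hdegP : ∀ j, P j ∈ degreeLT K (M * n) := by
    intro j
    rw [mem_degreeLT]
    have hnd : (P j).natDegree = (M - 1) + (n - 1) * M := by
      rw [hP]
      show ((X - C (z j)) ^ (M - 1) * ∏ i ∈ univ.erase j, (X - C (z i)) ^ M).natDegree = _
      rw [Monic.natDegree_mul ((monic_X_sub_C _).pow _)
        (monic_prod_of_monic _ _ fun i _ => (monic_X_sub_C _).pow _)]
      rw [natDegree_pow, natDegree_X_sub_C, mul_one]
      congr 1
      rw [natDegree_prod _ _ fun i _ => pow_ne_zero _ (X_sub_C_ne_zero _)]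
      have : ∀ i ∈ univ.erase j, ((X - C (z i)) ^ M).natDegree = M := by
        intro i _
        rw [natDegree_pow, natDegree_X_sub_C, mul_one]
      rw [Finset.sum_congr rfl this, Finset.sum_const, Finset.card_erase_of_mem (mem_univ j),
        card_univ, Fintype.card_fin, smul_eq_mul]
    rw [degree_eq_natDegree (hmonicP j).ne_zero, hnd]
    have h1 : (n - 1) * M = n * M - M := by rw [Nat.sub_mul, one_mul]
    have h2 : M ≤ n * M := Nat.le_mul_of_pos_left M hn1
    have h3 : n * M = M * n := Nat.mul_comm _ _
    exact_mod_cast (by omega : (M - 1) + (n - 1) * M < M * n)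
  have hspan : Submodule.span K (Set.range P) = LinearMap.range φ :=
    (Fintype.range_linearCombination K P).symm
  have hrange : ∀ c, φ c ∈ degreeLT K (M * n) := by
    intro c
    rw [hφapp]
    exact Submodule.sum_mem _ fun j _ => Submodule.smul_mem _ _ (hdegP j)
  have hMn1 : 0 < M * n := Nat.mul_pos (by omega) hn1
  -- the intersection is the image of the kernel
  have hSeq : Submodule.span K (Set.range P) ⊓
      Submodule.map (derivative (R := K)) (degreeLT K (M * n + 1)) =
      Submodule.map φ (LinearMap.ker ψ) := by
    apply le_antisymm
    · intro f hf
      rw [Submodule.mem_inf] at hf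
      obtain ⟨hf1, hf2⟩ := hf
      rw [hspan] at hf1
      obtain ⟨c, rfl⟩ := hf1
      refine ⟨c, ?_, rfl⟩
      rw [SetLike.mem_coe, LinearMap.mem_ker]
      funext t
      have hch := (mem_map_derivative_iff p (M * n) hMn1 (φ c)).mp hf2
      show ψ c t = 0
      rw [hψcoeff c t]
      exact hch.2 (d t) (hdlt t) (hddvd t)
    · intro f hf
      obtain ⟨c, hc, rfl⟩ := hf
      rw [SetLike.mem_coe, LinearMap.mem_ker] at hc
      rw [Submodule.mem_inf]
      constructor
      · rw [hspan]; exact LinearMap.mem_range_self _ _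
      · apply (mem_map_derivative_iff p (M * n) hMn1 (φ c)).mpr
        refine ⟨hrange c, ?_⟩
        intro j hj hdvdj
        obtain ⟨t', h1, h2, h3⟩ := hdec j hj hdvdj
        have ht : t' - 1 < a * k := by omega
        have hjd : j = d ⟨t' - 1, ht⟩ := by
          simp only [hd]
          have ht1 : (t' - 1) + 1 = t' := by omega
          rw [ht1]
          omega
        rw [hjd, ← hψcoeff c ⟨t' - 1, ht⟩, hc]
        rfl
  -- injectivity of φ
  have hzinj : Function.Injective z := by
    intro i j h
    exact MvPolynomial.X_injective (hinj h)
  set Φ₁ : K[X] := ∏ i, (X - C (z i)) ^ (M - 1) with hΦ₁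
  set G : Fin n → K[X] := fun j => ∏ i ∈ univ.erase j, (X - C (z i)) with hG
  have hfac : ∀ j, P j = Φ₁ * G j := by
    intro j
    rw [hP]
    show (X - C (z j)) ^ (M - 1) * ∏ i ∈ univ.erase j, (X - C (z i)) ^ M = _
    have h1 : ∀ i : Fin n, (X - C (z i)) ^ M = (X - C (z i)) ^ (M - 1) * (X - C (z i)) := by
      intro i
      rw [← pow_succ]
      congr 1
      omega
    rw [Finset.prod_congr rfl fun i _ => h1 i, Finset.prod_mul_distrib]
    rw [hΦ₁, ← Finset.mul_prod_erase univ (fun i => (X - C (z i)) ^ (M - 1)) (mem_univ j)]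
    rw [hG]
    ring
  have hker : ∀ c, φ c = 0 → c = 0 := by
    intro c hc0
    rw [hφapp] at hc0
    have h2 : Φ₁ * (∑ j, c j • G j) = 0 := by
      rw [Finset.mul_sum]
      calc ∑ j, Φ₁ * (c j • G j) = ∑ j, c j • P j := by
            refine Finset.sum_congr rfl fun j _ => ?_
            rw [mul_smul_comm, ← hfac j]
        _ = 0 := hc0
    have hΦne : Φ₁ ≠ 0 :=
      (monic_prod_of_monic _ _ fun i _ => (monic_X_sub_C _).pow _).ne_zero
    have hsum : ∑ j, c j • G j = 0 := by
      rcases mul_eq_zero.mp h2 with h | h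
      · exact absurd h hΦne
      · exact h
    funext j
    have hev := congrArg (eval (z j)) hsum
    rw [eval_finset_sum, eval_zero] at hev
    simp only [smul_eq_C_mul, eval_mul, eval_C] at hev
    rw [Finset.sum_eq_single j (fun i _ hij => ?_) (fun h => absurd (mem_univ j) h)] at hev
    · have hGne : eval (z j) (G j) ≠ 0 := by
        rw [hG]
        simp only [eval_prod, eval_sub, eval_X, eval_C]
        rw [Finset.prod_ne_zero_iff]
        intro i hi
        exact sub_ne_zero.mpr fun h => (Finset.mem_erase.mp hi).1 (hzinj h.symm)
      have := (mul_eq_zero.mp hev).resolve_right hGne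
      simpa using this
    · have hzero : eval (z j) (G i) = 0 := by
        rw [hG]
        simp only [eval_prod, eval_sub, eval_X, eval_C]
        exact Finset.prod_eq_zero (Finset.mem_erase.mpr ⟨Ne.symm hij, mem_univ j⟩) (sub_self _)
      rw [hzero, mul_zero]
  have hφinj : Function.Injective φ :=
    LinearMap.ker_eq_bot.mp (LinearMap.ker_eq_bot'.mpr hker)
  -- surjectivity of ψ
  have hψsurj : Function.Surjective ψ := by
    have hpnd : ¬ p ∣ n := fun hdn => absurd (Nat.le_of_dvd hn1 hdn) (by omega)
    set L := AlgebraicClosure (ZMod p) with hL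
    haveI : CharP L p := charP_of_injective_ringHom (algebraMap (ZMod p) L).injective p
    obtain ⟨ζ, hζ⟩ : ∃ ζ : L, IsPrimitiveRoot ζ n := by
      haveI : NeZero (n : L) := ⟨by rw [Ne, CharP.cast_eq_zero_iff L p n]; exact hpnd⟩
      obtain ⟨r, hr⟩ := IsAlgClosed.exists_root (cyclotomic n L)
        (degree_cyclotomic_pos n L hn1).ne.symm
      exact ⟨r, isRoot_cyclotomic_iff.mp hr⟩
    have hζn : ζ ^ n = 1 := hζ.pow_eq_one
    set σ : R →+* L :=
      (MvPolynomial.aeval (R := ZMod p) (fun i : Fin n => ζ ^ (i : ℕ))).toRingHom with hσ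
    set w : Fin n → L := fun j => ζ ^ (j : ℕ) with hw
    have hσX : ∀ j, σ (MvPolynomial.X j) = w j := fun j => MvPolynomial.aeval_X _ j
    set sfn : Fin (a * k) → ℕ := fun t => d t % n with hsfn
    set efn : Fin (a * k) → ℕ := fun t => d t / n with hefn
    have hsn : ∀ t, sfn t < n := fun t => Nat.mod_lt _ hn1
    have hde : ∀ t, d t = n * efn t + sfn t := fun t => (Nat.div_add_mod (d t) n).symm
    have heM : ∀ t, efn t ≤ M - 1 := by
      intro t
      have h1 : d t / n < M := (Nat.div_lt_iff_lt_mul hn1).mpr (by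
        have h2 := hdlt t
        have h3 : M * n = n * M := Nat.mul_comm _ _
        omega)
      have h4 : 1 ≤ M := by omega
      simp only [hefn]
      omega
    have hdmono : ∀ t1 t2 : Fin (a * k), (t1 : ℕ) ≤ (t2 : ℕ) → d t1 ≤ d t2 := by
      intro t1 t2 h12
      have := Nat.mul_le_mul_left p (show (t1 : ℕ) + 1 ≤ (t2 : ℕ) + 1 by omega)
      simp only [hd]
      omega
    have hsinj : Function.Injective sfn := by
      have key : ∀ t1 t2 : Fin (a * k), (t1 : ℕ) ≤ (t2 : ℕ) → sfn t1 = sfn t2 → t1 = t2 := by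
        intro t1 t2 hle hs12
        have hd12 : d t1 ≤ d t2 := hdmono t1 t2 hle
        have h1 : d t2 - d t1 = p * ((t2 : ℕ) - (t1 : ℕ)) := by
          have e1 : d t1 + 1 = p * ((t1 : ℕ) + 1) := by
            have := hdge (t1 : ℕ); simp only [hd]; omega
          have e2 : d t2 + 1 = p * ((t2 : ℕ) + 1) := by
            have := hdge (t2 : ℕ); simp only [hd]; omega
          have e3 : p * ((t2 : ℕ) + 1) = p * ((t2 : ℕ) - (t1 : ℕ)) + p * ((t1 : ℕ) + 1) := by
            rw [← Nat.mul_add]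
            congr 1
            omega
          omega
        have hee : efn t1 ≤ efn t2 := by
          have g1 := hde t1
          have g2 := hde t2
          have g3 : n * efn t1 ≤ n * efn t2 := by omega
          exact Nat.le_of_mul_le_mul_left g3 hn1
        have h2 : n ∣ (d t2 - d t1) := by
          refine ⟨efn t2 - efn t1, ?_⟩
          have e4 : n * (efn t2 - efn t1) + n * efn t1 = n * efn t2 := by
            rw [← Nat.mul_add]
            congr 1
            omega
          have g1 := hde t1
          have g2 := hde t2
          omega
        rw [h1] at h2
        have hcop : Nat.Coprime n p := ((Nat.Prime.coprime_iff_not_dvd hp).mpr hpnd).symm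
        have h3 : n ∣ ((t2 : ℕ) - (t1 : ℕ)) := hcop.dvd_of_dvd_mul_left h2
        have h4 : (t2 : ℕ) - (t1 : ℕ) < n := by
          have := t2.2
          omega
        have h5 : (t2 : ℕ) - (t1 : ℕ) = 0 := by
          rcases Nat.eq_zero_or_pos ((t2 : ℕ) - (t1 : ℕ)) with h | h
          · exact h
          · exact absurd (Nat.le_of_dvd h h3) (by omega)
        exact Fin.ext (by omega)
      intro t1 t2 h12
      rcases le_total (t1 : ℕ) (t2 : ℕ) with h | h
      · exact key t1 t2 h h12
      · exact (key t2 t1 h h12.symm).symm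
    have hXn : (X : L[X]) ^ n - 1 = ∏ i : Fin n, (X - C (w i)) := by
      have h0 := X_pow_sub_C_eq_prod hζ hn1 (one_pow n)
      rw [map_one] at h0
      rw [h0, ← Fin.prod_univ_eq_prod_range (fun i => (X : L[X]) - C (ζ ^ i * 1)) n]
      exact Finset.prod_congr rfl fun i _ => by rw [mul_one]
    have hwn : ∀ j, (w j) ^ n = 1 := by
      intro j
      rw [hw]
      show (ζ ^ (j : ℕ)) ^ n = 1
      rw [← pow_mul, Nat.mul_comm, pow_mul, hζn, one_pow]
    have hgeom : ∀ j : Fin n, ∏ i ∈ univ.erase j, (X - C (w i)) =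
        ∑ s ∈ range n, (X : L[X]) ^ s * C ((w j) ^ (n - 1 - s)) := by
      intro j
      have hXC : (X : L[X]) - C (w j) ≠ 0 := X_sub_C_ne_zero _
      apply mul_left_cancel₀ hXC
      have h1 : (X - C (w j)) * ∏ i ∈ univ.erase j, (X - C (w i)) = (X : L[X]) ^ n - 1 := by
        rw [hXn, Finset.mul_prod_erase univ (fun i => (X : L[X]) - C (w i)) (mem_univ j)]
      have h2 : (X - C (w j)) * (∑ s ∈ range n, (X : L[X]) ^ s * C ((w j) ^ (n - 1 - s))) =
          (X : L[X]) ^ n - 1 := by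
        rw [mul_comm]
        have h3 := geom_sum₂_mul (X : L[X]) (C (w j)) n
        have h4 : ∑ s ∈ range n, (X : L[X]) ^ s * C ((w j) ^ (n - 1 - s)) =
            ∑ s ∈ range n, (X : L[X]) ^ s * (C (w j)) ^ (n - 1 - s) :=
          Finset.sum_congr rfl fun s _ => by rw [C_pow]
        rw [h4, h3, ← C_pow, hwn j, C_1]
      rw [h1, h2]
    have hmapQ : ∀ j, (Q j).map σ =
        ((X : L[X]) ^ n - 1) ^ (M - 1) *
          ∑ s ∈ range n, (X : L[X]) ^ s * C ((w j) ^ (n - 1 - s)) := by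
      intro j
      have h0 : (Q j).map σ =
          (X - C (w j)) ^ (M - 1) * ∏ i ∈ univ.erase j, (X - C (w i)) ^ M := by
        simp only [hQ, Polynomial.map_mul, Polynomial.map_pow, Polynomial.map_sub,
          Polynomial.map_X, Polynomial.map_C, Polynomial.map_prod, hσX]
      rw [h0, ← hgeom j]
      rw [Finset.prod_pow]
      have hBM : (∏ i ∈ univ.erase j, ((X : L[X]) - C (w i))) ^ M =
          (∏ i ∈ univ.erase j, ((X : L[X]) - C (w i))) ^ (M - 1) *
            ∏ i ∈ univ.erase j, ((X : L[X]) - C (w i)) := by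
        conv_lhs => rw [show M = (M - 1) + 1 by omega]
        rw [pow_succ]
      rw [hBM, ← mul_assoc, ← mul_pow, Finset.mul_prod_erase univ (fun i => (X : L[X]) - C (w i)) (mem_univ j), ← hXn]
    have hsled : ∀ (t : Fin (a * k)) (s : ℕ), s < n → s ≤ d t := by
      intro t s hs
      have h1 := hdge (t : ℕ)
      simp only [hd]
      omega
    have hcoeffQ : ∀ (t : Fin (a * k)) (j : Fin n), ((Q j).map σ).coeff (d t) =
        (w j) ^ (n - 1 - sfn t) *
          ((-1) ^ ((M - 1) - efn t) * (((M - 1).choose (efn t) : ℕ) : L)) := by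
      intro t j
      rw [hmapQ j, mul_comm, Finset.sum_mul, finset_sum_coeff]
      have hterm : ∀ s ∈ range n,
          ((X : L[X]) ^ s * C ((w j) ^ (n - 1 - s)) * ((X : L[X]) ^ n - 1) ^ (M - 1)).coeff (d t)
            = (w j) ^ (n - 1 - s) * ((((X : L[X]) ^ n - 1) ^ (M - 1)).coeff (d t - s)) := by
        intro s hs
        have hsd := hsled t s (mem_range.mp hs)
        rw [mul_comm ((X : L[X]) ^ s) (C ((w j) ^ (n - 1 - s))), mul_assoc, coeff_C_mul,
          coeff_X_pow_mul', if_pos hsd]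
      rw [Finset.sum_congr rfl hterm]
      rw [Finset.sum_eq_single_of_mem (sfn t) (mem_range.mpr (hsn t))]
      · have hnum : d t - sfn t = n * efn t := by
          have := hde t
          omega
        rw [hnum, coeff_X_pow_sub_one_pow n (M - 1) (n * efn t) hn1]
        rw [if_pos ⟨⟨efn t, rfl⟩, by rw [Nat.mul_div_cancel_left _ hn1]; exact heM t⟩]
        rw [Nat.mul_div_cancel_left _ hn1]
      · intro s hs hne
        have hsd := hsled t s (mem_range.mp hs)
        rw [coeff_X_pow_sub_one_pow n (M - 1) (d t - s) hn1, if_neg, mul_zero]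
        rintro ⟨⟨c0, hc0⟩, -⟩
        have h1 : d t = n * c0 + s := by omega
        have h2 : d t % n = s := by
          rw [h1, Nat.mul_add_mod]
          exact Nat.mod_eq_of_lt (mem_range.mp hs)
        exact hne (by rw [hsfn]; exact h2.symm ▸ rfl)
    -- the square submatrix
    have hem : a * k ≤ n := le_of_lt hakn
    set em : Fin (a * k) → Fin n := Fin.castLE hem with hemdef
    set N : Matrix (Fin (a * k)) (Fin (a * k)) R :=
      Matrix.of (fun t u => (Q (em u)).coeff (d t)) with hN
    set cf : Fin (a * k) → L :=
      fun t => (-1) ^ ((M - 1) - efn t) * (((M - 1).choose (efn t) : ℕ) : L) with hcf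
    set v : Fin (a * k) → L := fun t => ζ ^ (n - 1 - sfn t) with hv
    have hNmap : N.map σ = Matrix.diagonal cf * Matrix.vandermonde v := by
      ext t u
      rw [Matrix.map_apply, Matrix.diagonal_mul, Matrix.vandermonde_apply]
      show σ ((Q (em u)).coeff (d t)) = cf t * v t ^ (u : ℕ)
      rw [← Polynomial.coeff_map, hcoeffQ t (em u)]
      have h1 : w (em u) = ζ ^ (u : ℕ) := rfl
      rw [h1, mul_comm]
      congr 1
      rw [hv, ← pow_mul, ← pow_mul, Nat.mul_comm]
    have hvinj : Function.Injective v := by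
      intro t1 t2 h12
      have h1 : n - 1 - sfn t1 < n := by have := hsn t1; omega
      have h2 : n - 1 - sfn t2 < n := by have := hsn t2; omega
      have h3 : n - 1 - sfn t1 = n - 1 - sfn t2 := hζ.pow_inj h1 h2 h12
      apply hsinj
      have s1 := hsn t1
      have s2 := hsn t2
      omega
    have hcfne : ∀ t, cf t ≠ 0 := by
      intro t
      apply mul_ne_zero
      · exact pow_ne_zero _ (neg_ne_zero.mpr one_ne_zero)
      · rw [Ne, CharP.cast_eq_zero_iff L p]
        intro hc
        have hfac : (M - 1).choose (efn t) * ((efn t).factorial * ((M - 1) - efn t).factorial)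
            = (M - 1).factorial := by
          have h0 := Nat.choose_mul_factorial_mul_factorial (heM t)
          rw [← h0]
          ring
        have hpd : p ∣ (M - 1).factorial := hfac ▸ hc.mul_right _
        rw [Nat.Prime.dvd_factorial hp] at hpd
        omega
    have hdetN : N.det ≠ 0 := by
      intro h0
      have h1 : (N.map σ).det = 0 := by
        rw [← RingHom.mapMatrix_apply, ← RingHom.map_det, h0, map_zero]
      rw [hNmap, Matrix.det_mul, Matrix.det_diagonal, Matrix.det_vandermonde] at h1
      rcases mul_eq_zero.mp h1 with h | h
      · obtain ⟨t, -, ht⟩ := Finset.prod_eq_zero_iff.mp h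
        exact hcfne t ht
      · obtain ⟨ti, -, h2⟩ := Finset.prod_eq_zero_iff.mp h
        obtain ⟨tj, htj, h3⟩ := Finset.prod_eq_zero_iff.mp h2
        have h4 : v tj = v ti := by
          have := sub_eq_zero.mp h3
          exact this
        have h5 : tj = ti := hvinj h4
        rw [Finset.mem_Ioi] at htj
        exact absurd h5 (ne_of_gt htj)
    set B' : Matrix (Fin (a * k)) (Fin (a * k)) K := N.map (algebraMap R K) with hB'
    have hdetB' : B'.det ≠ 0 := by
      have h1 : B'.det = algebraMap R K N.det := by
        rw [hB', ← RingHom.mapMatrix_apply, ← RingHom.map_det]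
      rw [h1]
      intro h
      exact hdetN (hinj (show algebraMap R K N.det = algebraMap R K 0 by rw [h, map_zero]))
    have hBA : ∀ t u, B' t u = A t (em u) := by
      intro t u
      show algebraMap R K ((Q (em u)).coeff (d t)) = (P (em u)).coeff (d t)
      rw [hPQ, Polynomial.coeff_map]
    intro y
    have hunit : IsUnit B' := (Matrix.isUnit_iff_isUnit_det _).mpr (isUnit_iff_ne_zero.mpr hdetB')
    set x' := B'⁻¹.mulVec y with hx'
    have hBx : B'.mulVec x' = y := by
      rw [hx', Matrix.mulVec_mulVec,
        Matrix.mul_nonsing_inv _ ((Matrix.isUnit_iff_isUnit_det _).mp hunit), Matrix.one_mulVec]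
    refine ⟨fun j => ∑ u : Fin (a * k), if j = em u then x' u else 0, ?_⟩
    rw [hψmat]
    funext t
    show ∑ j, A t j * (∑ u, if j = em u then x' u else 0) = y t
    rw [← hBx]
    show _ = ∑ u, B' t u * x' u
    calc ∑ j, A t j * (∑ u, if j = em u then x' u else 0)
        = ∑ j, ∑ u, if j = em u then A t j * x' u else 0 := by
          refine Finset.sum_congr rfl fun j _ => ?_
          rw [Finset.mul_sum]
          refine Finset.sum_congr rfl fun u _ => ?_
          rw [mul_ite, mul_zero]
      _ = ∑ u, ∑ j, if j = em u then A t j * x' u else 0 := Finset.sum_comm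
      _ = ∑ u, A t (em u) * x' u := by
          refine Finset.sum_congr rfl fun u _ => ?_
          have hmem : em u ∈ (univ : Finset (Fin n)) := mem_univ _
          rw [Finset.sum_ite_eq' univ (em u) (fun j => A t j * x' u), if_pos hmem]
      _ = ∑ u, B' t u * x' u := Finset.sum_congr rfl fun u _ => by rw [hBA]
  -- conclusion
  show Module.finrank K ↥(Submodule.span K (Set.range P) ⊓
      Submodule.map (derivative (R := K)) (degreeLT K (M * n + 1))) = (q - a) * k + 1
  rw [hSeq]
  have hfr1 : Module.finrank K ↥(Submodule.map φ (LinearMap.ker ψ)) =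
      Module.finrank K ↥(LinearMap.ker ψ) :=
    (LinearEquiv.finrank_eq (Submodule.equivMapOfInjective φ hφinj (LinearMap.ker ψ))).symm
  rw [hfr1]
  have hrn := LinearMap.finrank_range_add_finrank_ker ψ
  rw [LinearMap.range_eq_top.mpr hψsurj, finrank_top, Module.finrank_fin_fun,
    Module.finrank_fin_fun] at hrn
  have hfinal : (q - a) * k = q * k - a * k := Nat.sub_mul q a k
  have h2 : a * k ≤ q * k := Nat.mul_le_mul_right k (le_of_lt ha2)
  have h3 : k * q = q * k := Nat.mul_comm _ _
  omega

/-- Over `𝔽_p(z) = 𝔽_p(z_1,…,z_n)`, with `n = kq+1`, `p > n`,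
`p > q`, `1 ≤ a < q`, `q ∣ ap−1`, `M = (ap−1)/q`, the intersection of
`Ω_log = span{Φ/(x−z_j)}` with the image under `∂/∂x` of the polynomials of
degree at most `Mn` has dimension `(q−a)·k + 1`. -/
theorem stmt14 (p q n k a M : ℕ) [Fact p.Prime] (hq : q.Prime)
    (hk : 0 < k) (hn : n = k * q + 1) (hpn : p > n) (hpq : p > q)
    (ha1 : 1 ≤ a) (ha2 : a < q) (hdvd : q ∣ (a * p - 1))
    (hM : M = (a * p - 1) / q) :
    letI K := FractionRing (MvPolynomial (Fin n) (ZMod p))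
    letI z : Fin n → K := fun j =>
      algebraMap (MvPolynomial (Fin n) (ZMod p)) K (MvPolynomial.X j)
    Module.finrank K
      ↥(Submodule.span K (Set.range fun j : Fin n => phiQuot n M z j 1) ⊓
        Submodule.map (Polynomial.derivative (R := K))
          (Polynomial.degreeLT K (M * n + 1)))
      = (q - a) * k + 1 := by
  exact stmt14_aux p q n k a M hq hk hn hpn hpq ha1 ha2 hdvd hM
end

section
/- Fix i with 1 ≤ i ≤ n and distinct z_1,...,z_n in a field where 2 is invertible, let M = 2 and Φ(x)=∏_{a=1}^n(x−z_a)^2, C_{i,l} = 2·Σ_{j≠i}(z_j−z_i)^{−l}, D_{i,l}(x) = 2·Σ_{j≠i}(z_j−z_i)^{−l}·Φ(x)/(x−z_j). Then (d/dx)(Φ/(x−z_i)^2 + C_{i,1}·Φ/(x−z_i)) = (D_{i,2} − C_{i,2}·Φ/(x−z_i)) + C_{i,1}·(D_{i,1} − C_{i,1}·Φ/(x−z_i)). -/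
open Polynomial Finset

/-- `Φ(x)/(x−z_i)^r` for `M = 2`: the exponent of `(x − z_i)` is lowered by `r`. -/
noncomputable def phiQuot2 {K : Type*} [Field K] (n : ℕ) (z : Fin n → K)
    (i : Fin n) (r : ℕ) : K[X] :=
  (X - C (z i)) ^ (2 - r) * ∏ a ∈ univ.erase i, (X - C (z a)) ^ 2

/-- `C_{i,l} = 2·Σ_{j≠i} (z_j − z_i)^{−l}`. -/
noncomputable def Ci2 {K : Type*} [Field K] (n : ℕ) (z : Fin n → K)
    (i : Fin n) (l : ℕ) : K :=
  2 * ∑ j ∈ univ.erase i, ((z j - z i) ^ l)⁻¹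

/-- `D_{i,l} = 2·Σ_{j≠i} (z_j − z_i)^{−l}·Φ/(x−z_j)`. -/
noncomputable def Di2 {K : Type*} [Field K] (n : ℕ) (z : Fin n → K)
    (i : Fin n) (l : ℕ) : K[X] :=
  2 • ∑ j ∈ univ.erase i, C (((z j - z i) ^ l)⁻¹) * phiQuot2 n z j 1

/-- Derivative of `P = ∏_{a ≠ i} (X - z_a)^2`. -/
lemma derivP17 {K : Type*} [Field K] (n : ℕ) (z : Fin n → K) (i : Fin n) :
    derivative (∏ a ∈ univ.erase i, (X - C (z a)) ^ 2) =
      ∑ j ∈ univ.erase i,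
        2 * ((X - C (z j)) * ∏ a ∈ (univ.erase i).erase j, (X - C (z a)) ^ 2) := by
  rw [Finset.prod_eq_multiset_prod, derivative_prod, ← Finset.sum_eq_multiset_sum]
  refine Finset.sum_congr rfl fun j hj => ?_
  rw [← Finset.erase_val, ← Finset.prod_eq_multiset_prod, derivative_pow, derivative_X_sub_C]
  push_cast
  simp only [map_ofNat, pow_one, mul_one]
  ring

/-- Expansion of `Φ/(x - z_j)` pulling out the factor at `i`. -/
lemma phiQ17 {K : Type*} [Field K] (n : ℕ) (z : Fin n → K) (i j : Fin n) (hij : j ≠ i) :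
    (X - C (z j)) ^ (2 - 1) * ∏ a ∈ univ.erase j, (X - C (z a)) ^ 2 =
      (X - C (z j)) * ((X - C (z i)) ^ 2 *
        ∏ a ∈ (univ.erase i).erase j, (X - C (z a)) ^ 2) := by
  have hi : i ∈ univ.erase j := mem_erase.mpr ⟨(Ne.symm hij), mem_univ i⟩
  rw [pow_one, ← Finset.mul_prod_erase _ _ hi, Finset.erase_right_comm]

lemma L2_17 {K : Type*} [Field K] (n : ℕ) (z : Fin n → K) (hz : Function.Injective z)
    (i : Fin n) :
    (X - C (z i)) * derivative (∏ a ∈ univ.erase i, (X - C (z a)) ^ 2) =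
      Di2 n z i 1 - C (Ci2 n z i 1) *
        ((X - C (z i)) * ∏ a ∈ univ.erase i, (X - C (z a)) ^ 2) := by
  rw [derivP17, Di2, Ci2, Finset.mul_sum, Finset.smul_sum, map_mul, map_sum, mul_assoc,
    Finset.sum_mul, Finset.mul_sum, ← Finset.sum_sub_distrib]
  refine Finset.sum_congr rfl fun j hj => ?_
  have hji : j ≠ i := (mem_erase.mp hj).1
  have hd : z j - z i ≠ 0 := sub_ne_zero.mpr (fun h => hji (hz h))
  rw [phiQuot2, phiQ17 n z i j hji]
  have hC : ((X - C (z i)) - (X - C (z j))) * C ((z j - z i)⁻¹) = (1 : K[X]) := by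
    have : ((X - C (z i)) - (X - C (z j))) = C (z j - z i) := by
      rw [map_sub]; ring
    rw [this, ← map_mul, mul_inv_cancel₀ hd, map_one]
  set R := ∏ a ∈ (univ.erase i).erase j, (X - C (z a)) ^ 2 with hR
  have hP : ∏ a ∈ univ.erase i, (X - C (z a)) ^ 2 = (X - C (z j)) ^ 2 * R := by
    rw [hR, ← Finset.mul_prod_erase _ _ hj]
  rw [hP, pow_one, two_smul]
  simp only [map_ofNat, pow_one]
  linear_combination (-(2 * (X - C (z i)) * (X - C (z j)) * R)) * hC

lemma L1_17 {K : Type*} [Field K] (n : ℕ) (z : Fin n → K) (hz : Function.Injective z)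
    (i : Fin n) :
    derivative (∏ a ∈ univ.erase i, (X - C (z a)) ^ 2) =
      Di2 n z i 2 - C (Ci2 n z i 2) *
        ((X - C (z i)) * ∏ a ∈ univ.erase i, (X - C (z a)) ^ 2)
      - C (Ci2 n z i 1) * ∏ a ∈ univ.erase i, (X - C (z a)) ^ 2 := by
  rw [derivP17]
  simp only [Di2, Ci2, map_mul, map_sum, map_ofNat, Finset.smul_sum, Finset.sum_mul,
    Finset.mul_sum]
  rw [← Finset.sum_sub_distrib, ← Finset.sum_sub_distrib]
  refine Finset.sum_congr rfl fun j hj => ?_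
  have hji : j ≠ i := (mem_erase.mp hj).1
  have hd : z j - z i ≠ 0 := sub_ne_zero.mpr (fun h => hji (hz h))
  rw [phiQuot2, phiQ17 n z i j hji]
  have hC : ((X - C (z i)) - (X - C (z j))) * C ((z j - z i)⁻¹) = (1 : K[X]) := by
    have : ((X - C (z i)) - (X - C (z j))) = C (z j - z i) := by
      rw [map_sub]; ring
    rw [this, ← map_mul, mul_inv_cancel₀ hd, map_one]
  set R := ∏ a ∈ (univ.erase i).erase j, (X - C (z a)) ^ 2 with hR
  have hP : ∏ a ∈ univ.erase i, (X - C (z a)) ^ 2 = (X - C (z j)) ^ 2 * R := by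
    rw [hR, ← Finset.mul_prod_erase _ _ hj]
  rw [hP, ← inv_pow, map_pow, two_smul]
  simp only [map_ofNat, pow_one]
  linear_combination (-(2 * (X - C (z j)) * R *
    (C ((z j - z i)⁻¹) * (X - C (z i)) + 1))) * hC

/-- for `M = 2` over a field where `2` is invertible,
`(Φ/(x−z_i)² + C_{i,1}·Φ/(x−z_i))'
  = (D_{i,2} − C_{i,2}·Φ/(x−z_i)) + C_{i,1}·(D_{i,1} − C_{i,1}·Φ/(x−z_i))`. -/
theorem stmt17 (K : Type*) [Field K] (h2 : (2 : K) ≠ 0) (n : ℕ) (hn : 0 < n)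
    (z : Fin n → K) (hz : Function.Injective z) (i : Fin n) :
    derivative (phiQuot2 n z i 2 + C (Ci2 n z i 1) * phiQuot2 n z i 1)
      = (Di2 n z i 2 - C (Ci2 n z i 2) * phiQuot2 n z i 1) +
        C (Ci2 n z i 1) *
          (Di2 n z i 1 - C (Ci2 n z i 1) * phiQuot2 n z i 1) := by
  have e1 : phiQuot2 n z i 2 = ∏ a ∈ univ.erase i, (X - C (z a)) ^ 2 := by
    rw [phiQuot2]; norm_num
  have e2 : phiQuot2 n z i 1 =
      (X - C (z i)) * ∏ a ∈ univ.erase i, (X - C (z a)) ^ 2 := by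
    rw [phiQuot2]; norm_num
  rw [e1, e2]
  rw [derivative_add, derivative_C_mul, derivative_mul, derivative_X_sub_C, one_mul]
  linear_combination L1_17 n z hz i + C (Ci2 n z i 1) * L2_17 n z hz i
end

section
/- For the KZ system over F_p(z), the annihilator of the span of the arithmetic solutions is isomorphic to Ω_log ∩ ∂(F_p(z)[x]_{≤Mn}): a covector (c_1(z),...,c_n(z)) ∈ F_p(z)^n satisfies Σ_j c_j(z)·P_j^{lp−1}(z) = 0 for all l = 1,...,ak if and only if there exists a polynomial Q(x,z) ∈ F_p(z)[x] with ∂Q/∂x = Σ_{j=1}^n c_j(z)·Φ(x,z)/(x−z_j). -/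
open Polynomial Finset

/-- Over a field of characteristic `p`, a polynomial is an `x`-derivative iff all its
coefficients at degrees `l*p - 1`, `l ≥ 1`, vanish. -/
lemma deriv_iff_aux {K : Type*} [Field K] (p : ℕ) [hp : Fact p.Prime] [CharP K p]
    (F : K[X]) :
    (∀ l : ℕ, 1 ≤ l → F.coeff (l * p - 1) = 0) ↔ ∃ Q : K[X], derivative Q = F := by
  constructor
  · intro h
    refine ⟨∑ i ∈ Finset.range (F.natDegree + 1), C (F.coeff i / ((i : K) + 1)) * X ^ (i + 1), ?_⟩
    rw [derivative_sum]
    conv_rhs => rw [F.as_sum_range_C_mul_X_pow]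
    refine Finset.sum_congr rfl fun i _ => ?_
    rw [derivative_C_mul, derivative_X_pow]
    simp only [Nat.add_sub_cancel, Nat.cast_add, Nat.cast_one]
    by_cases hz : ((i : K) + 1) = 0
    · have hdvd : p ∣ i + 1 := by
        rw [← CharP.cast_eq_zero_iff K p]
        push_cast
        exact hz
      obtain ⟨l, hl⟩ := hdvd
      have hl1 : 1 ≤ l := by
        rcases Nat.eq_zero_or_pos l with h0 | h0
        · subst h0; simp at hl
        · exact h0
      have hco : F.coeff i = 0 := by
        have hi : i = l * p - 1 := by
          have hcomm : p * l = l * p := Nat.mul_comm p l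
          omega
        rw [hi]; exact h l hl1
      rw [hz, hco]
      simp
    · rw [← mul_assoc, ← C_mul, div_mul_cancel₀ _ hz]
  · rintro ⟨Q, rfl⟩ l hl
    rw [coeff_derivative]
    have hlp : 1 ≤ l * p := Nat.mul_pos hl hp.out.pos
    have h0 : (l * p - 1) + 1 = l * p := by omega
    have h1 : ((l * p - 1 : ℕ) : K) + 1 = ((l * p : ℕ) : K) := by
      rw [← h0]; push_cast; ring
    rw [h1]
    have h2 : ((l * p : ℕ) : K) = 0 := by
      push_cast
      rw [CharP.cast_eq_zero K p, mul_zero]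
    rw [h2, mul_zero]

lemma phiQuot_natDegree_le {K : Type*} [Field K] (n M : ℕ) (z : Fin n → K) (i : Fin n) :
    (phiQuot n M z i 1).natDegree ≤ (M - 1) + (n - 1) * M := by
  unfold phiQuot
  refine natDegree_mul_le.trans (add_le_add ?_ ?_)
  · exact natDegree_pow_le.trans (by simp [natDegree_X_sub_C])
  · refine (natDegree_prod_le _ _).trans ?_
    have hcard : (univ.erase i).card = n - 1 := by
      rw [Finset.card_erase_of_mem (Finset.mem_univ i), Finset.card_univ, Fintype.card_fin]
    have hsum : ∑ a ∈ univ.erase i, ((X - C (z a)) ^ M).natDegree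
        ≤ ∑ _a ∈ univ.erase i, M :=
      Finset.sum_le_sum fun a _ => natDegree_pow_le.trans (by simp [natDegree_X_sub_C])
    refine hsum.trans ?_
    rw [Finset.sum_const, hcard, smul_eq_mul]

/-- For the KZ system over `𝔽_p(z)` (with `n = kq+1`, `p > n`,
`p > q`, `1 ≤ a < q`, `q ∣ ap−1`, `M = (ap−1)/q`), a covector
`(c_1,…,c_n) ∈ 𝔽_p(z)^n` annihilates all arithmetic solutions
`P^{lp−1} = ((Φ/(x−z_j)).coeff (lp−1))_j`, `l = 1,…,ak`, if and only if
`Σ_j c_j·Φ(x,z)/(x−z_j)` is the `x`-derivative of some `Q ∈ 𝔽_p(z)[x]`. -/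
theorem stmt19 (p q n k a M : ℕ) [Fact p.Prime] (hq : q.Prime)
    (hk : 0 < k) (hn : n = k * q + 1) (hpn : p > n) (hpq : p > q)
    (ha1 : 1 ≤ a) (ha2 : a < q) (hdvd : q ∣ (a * p - 1))
    (hM : M = (a * p - 1) / q)
    (z : Fin n → FractionRing (MvPolynomial (Fin n) (ZMod p)))
    (hzdef : z = fun j => algebraMap (MvPolynomial (Fin n) (ZMod p)) _
      (MvPolynomial.X j))
    (c : Fin n → FractionRing (MvPolynomial (Fin n) (ZMod p))) :
    (∀ l : ℕ, 1 ≤ l → l ≤ a * k →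
        ∑ j : Fin n, c j * (phiQuot n M z j 1).coeff (l * p - 1) = 0)
      ↔ ∃ Q : (FractionRing (MvPolynomial (Fin n) (ZMod p)))[X],
          derivative Q = ∑ j : Fin n, C (c j) * phiQuot n M z j 1 := by
  haveI : CharP (FractionRing (MvPolynomial (Fin n) (ZMod p))) p :=
    charP_of_injective_algebraMap
      (IsFractionRing.injective (MvPolynomial (Fin n) (ZMod p))
        (FractionRing (MvPolynomial (Fin n) (ZMod p)))) p
  have hpp : p.Prime := Fact.out
  set F : (FractionRing (MvPolynomial (Fin n) (ZMod p)))[X] :=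
    ∑ j : Fin n, C (c j) * phiQuot n M z j 1 with hF
  have hcoeff : ∀ m : ℕ, F.coeff m = ∑ j : Fin n, c j * (phiQuot n M z j 1).coeff m := by
    intro m
    rw [hF, finset_sum_coeff]
    exact Finset.sum_congr rfl fun j _ => by rw [coeff_C_mul]
  -- arithmetic facts
  have hq1 : 1 ≤ q := hq.one_le
  have hp2 : 2 ≤ p := hpp.two_le
  have hap1 : 1 ≤ a * p := Nat.mul_pos ha1 hpp.pos
  have hb : M * q = a * p - 1 := by
    rw [hM]; exact Nat.div_mul_cancel hdvd
  have hap2 : a * p = M * q + 1 := by omega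
  -- M < p
  have hMp : M < p := by
    have h5 : a * p ≤ (q - 1) * p := Nat.mul_le_mul_right p (by omega)
    have h6 : (q - 1) * p + p = q * p := by
      have : q - 1 + 1 = q := by omega
      calc (q - 1) * p + p = ((q - 1) + 1) * p := by ring
        _ = q * p := by rw [this]
    have h7 : q * p = p * q := Nat.mul_comm q p
    have hMq : M * q < p * q := by omega
    exact Nat.lt_of_mul_lt_mul_right hMq
  -- the degree bound kills coefficients for l > a*k
  have hdeg : ∀ l : ℕ, a * k < l → F.coeff (l * p - 1) = 0 := by
    intro l hl
    rw [hcoeff]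
    refine Finset.sum_eq_zero fun j _ => ?_
    have hbound := phiQuot_natDegree_le n M z j
    have h1 : (n - 1) * M = k * (M * q) := by
      have hn1 : n - 1 = k * q := by omega
      rw [hn1]; ring
    have h2 : (a * k + 1) * p = k * (a * p) + p := by ring
    have h3 : k * (a * p) = k * (M * q) + k := by rw [hap2]; ring
    have h4 : (a * k + 1) * p ≤ l * p := Nat.mul_le_mul_right p (by omega)
    have hlt : (phiQuot n M z j 1).natDegree < l * p - 1 := by omega
    rw [coeff_eq_zero_of_natDegree_lt hlt, mul_zero]
  -- put everything together
  have key := deriv_iff_aux p F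
  constructor
  · intro h
    rw [← key]
    intro l hl
    rcases Nat.lt_or_ge (a * k) l with hcase | hcase
    · exact hdeg l hcase
    · rw [hcoeff]; exact h l hl hcase
  · intro hQ l hl _
    rw [← hcoeff]
    exact key.mpr hQ l hl
end
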